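/- arXiv:2304.04651 — 7 statements merged into one kernel-verified Lean document; each statement's English description precedes it below -/
import Mathlib

section
/- An ideal independent family $\mathcal{A}$ is maximal (with respect to inclusion among ideal independent families) if and only if every infinite set $X \subseteq \omega$ either lies in the ideal generated by $\mathcal{A}$ (i.e., $X \subseteq^* \bigcup \mathcal{F}$ for some finite $\mathcal{F} \subseteq \mathcal{A}$) or belongs to $\mathcal{F}(\mathcal{A}, A)$ for some $A \in \mathcal{A}$. -/
/-- A family of infinite subsets of ω is *ideal independent* if no member is
almost covered by finitely many of the others. -/
def IdealIndependent (A : Set (Set ℕ)) : Prop :=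
  (∀ X ∈ A, X.Infinite) ∧
  ∀ X ∈ A, ∀ F : Finset (Set ℕ), ↑F ⊆ A \ {X} → (X \ ⋃ Y ∈ F, Y).Infinite

/-- Maximal ideal independent family: no ideal independent family properly contains it. -/
def MaximalIdealIndependent (A : Set (Set ℕ)) : Prop :=
  IdealIndependent A ∧ ∀ B : Set (Set ℕ), IdealIndependent B → A ⊆ B → B = A

/-- Generating sets of the complemented filter `𝓕(A, X)`. -/
def genSets (A : Set (Set ℕ)) (X : Set ℕ) : Set (Set ℕ) :=
  {S | ∃ F : Finset (Set ℕ), ↑F ⊆ A \ {X} ∧ S = X \ ⋃ Y ∈ F, Y}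

/-- The complemented filter `𝓕(A, X)` generated by the sets `X \ ⋃ 𝓑`,
`𝓑` a finite subset of `A \ {X}`. -/
def complFilter (A : Set (Set ℕ)) (X : Set ℕ) : Filter ℕ :=
  Filter.generate (genSets A X)

/-- The ideal `𝓙(A)` generated by the pairwise intersections of distinct members
of `A` together with the finite sets. -/
def idealJ (A : Set (Set ℕ)) : Set (Set ℕ) :=
  {X | ∃ F : Finset (Set ℕ × Set ℕ),
    (∀ p ∈ F, p.1 ∈ A ∧ p.2 ∈ A ∧ p.1 ≠ p.2) ∧
    (X \ ⋃ p ∈ F, p.1 ∩ p.2).Finite}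

lemma mem_complFilter {A : Set (Set ℕ)} {C X : Set ℕ} :
    X ∈ complFilter A C ↔ ∃ F : Finset (Set ℕ), ↑F ⊆ A \ {C} ∧ C \ ⋃ Y ∈ F, Y ⊆ X := by
  classical
  constructor
  · intro h
    rw [complFilter, Filter.mem_generate_iff] at h
    obtain ⟨t, hts, htf, hsub⟩ := h
    choose! g hg1 hg2 using fun s (hs : s ∈ genSets A C) => hs
    refine ⟨htf.toFinset.biUnion g, ?_, ?_⟩
    · intro Y hY
      simp only [Finset.coe_biUnion, Set.mem_iUnion, Finset.mem_coe] at hY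
      obtain ⟨s, hs, hYs⟩ := hY
      rw [Set.Finite.mem_toFinset] at hs
      exact hg1 s (hts hs) hYs
    · intro x hx
      apply hsub
      rw [Set.mem_sInter]
      intro s hs
      rw [hg2 s (hts hs)]
      refine ⟨hx.1, ?_⟩
      intro hxs
      apply hx.2
      simp only [Set.mem_iUnion] at hxs ⊢
      obtain ⟨Y, hY, hxY⟩ := hxs
      exact ⟨Y, Finset.mem_biUnion.mpr ⟨s, htf.mem_toFinset.mpr hs, hY⟩, hxY⟩
  · rintro ⟨F, hF, hsub⟩
    rw [complFilter, Filter.mem_generate_iff]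
    exact ⟨{C \ ⋃ Y ∈ F, Y}, by simpa using ⟨F, hF, rfl⟩, Set.finite_singleton _, by simpa using hsub⟩


/-- An ideal independent family is maximal iff every infinite `X ⊆ ω` is either in the
ideal generated by `A` or belongs to some complemented filter `𝓕(A, B)`. -/
theorem stmt4 (A : Set (Set ℕ)) (hA : IdealIndependent A) :
    MaximalIdealIndependent A ↔
      ∀ X : Set ℕ, X.Infinite →
        ((∃ F : Finset (Set ℕ), ↑F ⊆ A ∧ (X \ ⋃ Y ∈ F, Y).Finite) ∨
         (∃ B ∈ A, X ∈ complFilter A B)) := by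
  classical
  constructor
  · intro hmax X hX
    by_contra hcon
    push_neg at hcon
    obtain ⟨hid, hfil⟩ := hcon
    have hid' : ∀ F : Finset (Set ℕ), ↑F ⊆ A → (X \ ⋃ Y ∈ F, Y).Infinite :=
      fun F hF => hid F hF
    have hfil' : ∀ B ∈ A, ∀ 𝓓 : Finset (Set ℕ), ↑𝓓 ⊆ A \ {B} →
        (B \ (X ∪ ⋃ Y ∈ 𝓓, Y)).Nonempty := by
      intro B hB 𝓓 h𝓓
      rw [Set.nonempty_iff_ne_empty]
      intro hemp
      apply hfil B hB
      rw [mem_complFilter]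
      refine ⟨𝓓, h𝓓, ?_⟩
      intro x hx
      by_contra hxX
      have : x ∈ B \ (X ∪ ⋃ Y ∈ 𝓓, Y) := ⟨hx.1, fun h => h.elim hxX hx.2⟩
      rw [hemp] at this
      exact this
    -- (*) : fresh almost-covered member avoiding any finite 𝓖
    have hstar : ∀ 𝓖 : Finset (Set ℕ), ↑𝓖 ⊆ A → ∃ B ∈ A, B ∉ 𝓖 ∧
        ∃ 𝓒 : Finset (Set ℕ), ↑𝓒 ⊆ A \ {B} ∧ (B \ (X ∪ ⋃ Y ∈ 𝓒, Y)).Finite := by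
      intro 𝓖 h𝓖
      set Y := X \ ⋃ Z ∈ 𝓖, Z with hYdef
      have hYinf : Y.Infinite := hid' 𝓖 h𝓖
      have hYX : Y ⊆ X := Set.diff_subset
      have hYA : Y ∉ A := by
        intro hYA
        exact hfil Y hYA (mem_complFilter.mpr ⟨∅, by simp, by simpa using hYX⟩)
      have hni : ¬ IdealIndependent (insert Y A) := by
        intro h
        exact hYA (by rw [← hmax.2 _ h (Set.subset_insert _ _)]; exact Set.mem_insert _ _)
      rcases not_and_or.mp hni with h1 | h2
      · push_neg at h1
        obtain ⟨Z, hZ, hZinf⟩ := h1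
        rcases hZ with rfl | hZA
        · exact absurd hYinf (Set.not_infinite.mpr hZinf)
        · exact absurd (hA.1 Z hZA) (Set.not_infinite.mpr hZinf)
      · push_neg at h2
        obtain ⟨Z, hZ, F, hF, hFfin⟩ := h2
        rcases hZ with rfl | hZA
        · -- the failing member is Y itself
          have hFA : ↑F ⊆ A := by
            intro W hW
            rcases hF hW with ⟨hW1, hW2⟩
            rcases hW1 with rfl | hWA
            · exact absurd rfl hW2
            · exact hWA
          have heq : Y \ ⋃ W ∈ F, W = X \ ⋃ W ∈ 𝓖 ∪ F, W := by
            rw [hYdef]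
            ext x
            simp only [Set.mem_diff, Set.mem_iUnion, Finset.mem_union, exists_prop,
              not_exists, not_and]
            constructor
            · rintro ⟨⟨hx1, hx2⟩, hx3⟩
              exact ⟨hx1, fun W hW => hW.elim (fun h => hx2 W h) (fun h => hx3 W h)⟩
            · rintro ⟨hx1, hx2⟩
              exact ⟨⟨hx1, fun W hW => hx2 W (Or.inl hW)⟩, fun W hW => hx2 W (Or.inr hW)⟩
          rw [heq] at hFfin
          exact absurd hFfin (hid' (𝓖 ∪ F) (by
            intro W hW
            rcases Finset.mem_union.mp hW with h | h
            · exact h𝓖 h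
            · exact hFA h))
        · set F₀ := F.erase Y with hF₀def
          have hF₀ : ↑F₀ ⊆ A \ {Z} := by
            intro W hW
            rw [hF₀def, Finset.coe_erase, Set.mem_diff] at hW
            obtain ⟨hWF, hWY⟩ := hW
            rcases hF hWF with ⟨hW1, hW2⟩
            rcases hW1 with rfl | hWA
            · exact absurd rfl hWY
            · exact ⟨hWA, hW2⟩
          by_cases hYF : Y ∈ F
          · have hZ𝓖 : Z ∉ 𝓖 := by
              intro hZ𝓖
              have hsub : Z \ ⋃ W ∈ F₀, W ⊆ Z \ ⋃ W ∈ F, W := by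
                intro x hx
                refine ⟨hx.1, ?_⟩
                intro hxF
                rw [Set.mem_iUnion₂] at hxF
                obtain ⟨W, hWF, hxW⟩ := hxF
                by_cases hWY : W = Y
                · subst hWY
                  rw [hYdef] at hxW
                  exact hxW.2 (Set.mem_iUnion₂.mpr ⟨Z, hZ𝓖, hx.1⟩)
                · exact hx.2 (Set.mem_iUnion₂.mpr
                    ⟨W, by rw [hF₀def]; exact Finset.mem_erase.mpr ⟨hWY, hWF⟩, hxW⟩)
              exact absurd (hFfin.subset hsub) (hA.2 Z hZA F₀ hF₀)
            refine ⟨Z, hZA, hZ𝓖, F₀ ∪ 𝓖, ?_, ?_⟩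
            · intro W hW
              rcases Finset.mem_union.mp hW with h | h
              · exact hF₀ h
              · exact ⟨h𝓖 h, fun he => hZ𝓖 (he ▸ h)⟩
            · apply hFfin.subset
              intro x hx
              obtain ⟨hx1, hx2⟩ := hx
              refine ⟨hx1, ?_⟩
              intro hxF
              rw [Set.mem_iUnion₂] at hxF
              obtain ⟨W, hWF, hxW⟩ := hxF
              by_cases hWY : W = Y
              · subst hWY
                exact hx2 (Or.inl (hYX hxW))
              · exact hx2 (Or.inr (Set.mem_iUnion₂.mpr
                  ⟨W, Finset.mem_union_left _ (by rw [hF₀def]; exact Finset.mem_erase.mpr ⟨hWY, hWF⟩), hxW⟩))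
          · have hFA : ↑F ⊆ A \ {Z} := by
              intro W hW
              rcases hF hW with ⟨hW1, hW2⟩
              rcases hW1 with rfl | hWA
              · exact absurd hW (by exact_mod_cast hYF)
              · exact ⟨hWA, hW2⟩
            exact absurd hFfin (hA.2 Z hZA F hFA)
    -- privacy : any almost-covered member has a private point outside X
    have hpriv : ∀ B ∈ A, ∀ 𝓒 : Finset (Set ℕ), ↑𝓒 ⊆ A \ {B} →
        (B \ (X ∪ ⋃ Y ∈ 𝓒, Y)).Finite →
        ∃ n, n ∈ B ∧ n ∉ X ∧ ∀ C ∈ A, C ≠ B → n ∉ C := by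
      intro B hB 𝓒 h𝓒 hfin
      have hmono : ∀ 𝓓 : Finset (Set ℕ), 𝓒 ⊆ 𝓓 →
          B \ (X ∪ ⋃ Y ∈ 𝓓, Y) ⊆ B \ (X ∪ ⋃ Y ∈ 𝓒, Y) := by
        intro 𝓓 h𝓓 x hx
        refine ⟨hx.1, ?_⟩
        intro h
        rcases h with h | h
        · exact hx.2 (Or.inl h)
        · rw [Set.mem_iUnion₂] at h
          obtain ⟨W, hW, hxW⟩ := h
          exact hx.2 (Or.inr (Set.mem_iUnion₂.mpr ⟨W, h𝓓 hW, hxW⟩))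
      have hexists : ∃ k, ∃ 𝓓 : Finset (Set ℕ), ↑𝓓 ⊆ A \ {B} ∧ 𝓒 ⊆ 𝓓 ∧
          (B \ (X ∪ ⋃ Y ∈ 𝓓, Y)).ncard = k := ⟨_, 𝓒, h𝓒, Finset.Subset.refl _, rfl⟩
      obtain ⟨𝓓, h𝓓A, h𝓒𝓓, hk⟩ := Nat.find_spec hexists
      have hDfin : (B \ (X ∪ ⋃ Y ∈ 𝓓, Y)).Finite := hfin.subset (hmono 𝓓 h𝓒𝓓)
      obtain ⟨n, hn⟩ := hfil' B hB 𝓓 h𝓓A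
      refine ⟨n, hn.1, fun hx => hn.2 (Or.inl hx), ?_⟩
      intro C hC hCB hnC
      have h𝓓' : ↑(insert C 𝓓) ⊆ A \ {B} := by
        intro W hW
        rcases Finset.mem_insert.mp (by exact_mod_cast hW) with rfl | h
        · exact ⟨hC, hCB⟩
        · exact h𝓓A h
      have hsub' : B \ (X ∪ ⋃ Y ∈ insert C 𝓓, Y) ⊆ B \ (X ∪ ⋃ Y ∈ 𝓓, Y) := by
        intro x hx
        refine ⟨hx.1, ?_⟩
        intro h
        rcases h with h | h
        · exact hx.2 (Or.inl h)
        · rw [Set.mem_iUnion₂] at h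
          obtain ⟨W, hW, hxW⟩ := h
          exact hx.2 (Or.inr (Set.mem_iUnion₂.mpr ⟨W, Finset.mem_insert_of_mem hW, hxW⟩))
      have hple : Nat.find hexists ≤ (B \ (X ∪ ⋃ Y ∈ insert C 𝓓, Y)).ncard :=
        Nat.find_min' hexists ⟨insert C 𝓓, h𝓓',
          h𝓒𝓓.trans (Finset.subset_insert C 𝓓), rfl⟩
      have heq : B \ (X ∪ ⋃ Y ∈ insert C 𝓓, Y) = B \ (X ∪ ⋃ Y ∈ 𝓓, Y) :=
        Set.eq_of_subset_of_ncard_le hsub' (by rw [hk]; exact hple) hDfin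
      have hn' : n ∈ B \ (X ∪ ⋃ Y ∈ insert C 𝓓, Y) := heq.symm ▸ hn
      exact hn'.2 (Or.inr (Set.mem_iUnion₂.mpr ⟨C, Finset.mem_insert_self C 𝓓, hnC⟩))
    -- the set of private points
    set S : Set ℕ := {n : ℕ | n ∉ X ∧ ∃ B ∈ A, n ∈ B ∧ (∀ C ∈ A, C ≠ B → n ∉ C) ∧
        ∃ 𝓒 : Finset (Set ℕ), ↑𝓒 ⊆ A \ {B} ∧ (B \ (X ∪ ⋃ Y ∈ 𝓒, Y)).Finite} with hSdef
    have hSC : ∀ C ∈ A, (S ∩ C).Finite := by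
      intro C hC
      rcases Set.eq_empty_or_nonempty (S ∩ C) with he | ⟨n₀, hn₀S, hn₀C⟩
      · rw [he]; exact Set.finite_empty
      · obtain ⟨hn₀X, B, hBA, hn₀B, hp, 𝓒₀, h𝓒₀, hcov₀⟩ := hn₀S
        have hBC : B = C := by
          by_contra hne
          exact hp C hC (fun h => hne h.symm) hn₀C
        subst hBC
        apply hcov₀.subset
        rintro m ⟨hmS, hmC⟩
        obtain ⟨hmX, B', hB'A, hmB', hp', _⟩ := hmS
        have hB'B : B' = B := by
          by_contra hne
          exact hp' B hBA (fun h => hne h.symm) hmC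
        subst hB'B
        refine ⟨hmC, ?_⟩
        rintro (h | h)
        · exact hmX h
        · rw [Set.mem_iUnion₂] at h
          obtain ⟨W, hW, hmW⟩ := h
          obtain ⟨hWA, hWB⟩ := h𝓒₀ hW
          exact hp' W hWA hWB hmW
    have hSinf : S.Infinite := by
      by_contra hSfin
      rw [Set.not_infinite] at hSfin
      choose! O hOA hOn hOp 𝓒f h𝓒f1 h𝓒f2 using fun n (hn : n ∈ S) => hn.2
      have h𝓖A : ↑(hSfin.toFinset.image O) ⊆ A := by
        intro W hW
        simp only [Finset.coe_image, Set.mem_image, Finset.mem_coe,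
          Set.Finite.mem_toFinset] at hW
        obtain ⟨n, hnS, rfl⟩ := hW
        exact hOA n hnS
      obtain ⟨B, hBA, hB𝓖, 𝓒, h𝓒, hcov⟩ := hstar _ h𝓖A
      obtain ⟨n, hnB, hnX, hp⟩ := hpriv B hBA 𝓒 h𝓒 hcov
      have hnS : n ∈ S := ⟨hnX, B, hBA, hnB, hp, 𝓒, h𝓒, hcov⟩
      have hOB : O n = B := by
        by_contra hne
        exact hp (O n) (hOA n hnS) hne (hOn n hnS)
      exact hB𝓖 (Finset.mem_image.mpr ⟨n, hSfin.mem_toFinset.mpr hnS, hOB⟩)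
    have hSA : S ∉ A := by
      intro hSA
      obtain ⟨n, hnS⟩ := hSinf.nonempty
      have hnS' := hnS
      obtain ⟨hnX, B, hBA, hnB, hp, 𝓒, h𝓒, hcov⟩ := hnS
      have hBS : B = S := by
        by_contra hne
        exact hp S hSA (fun h => hne h.symm) hnS'
      subst hBS
      refine hSinf (hcov.subset ?_)
      intro m hmS
      have hmS' := hmS
      obtain ⟨hmX, B', hB'A, hmB', hp', _⟩ := hmS
      have hB'S : B' = S := by
        by_contra hne
        exact hp' S hSA (fun h => hne h.symm) hmS'
      refine ⟨hmS', ?_⟩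
      rintro (h | h)
      · exact hmX h
      · rw [Set.mem_iUnion₂] at h
        obtain ⟨W, hW, hmW⟩ := h
        obtain ⟨hWA, hWS⟩ := h𝓒 hW
        exact hp' W hWA (fun he => hWS (he.trans hB'S)) hmW
    have hind : IdealIndependent (insert S A) := by
      constructor
      · intro Z hZ
        rcases hZ with rfl | hZA
        · exact hSinf
        · exact hA.1 Z hZA
      · intro Z hZ F hF
        rcases hZ with rfl | hZA
        · have hFA : ↑F ⊆ A := by
            intro W hW
            rcases hF hW with ⟨hW1, hW2⟩
            rcases hW1 with rfl | hWA
            · exact absurd rfl hW2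
            · exact hWA
          have hfin1 : (S ∩ ⋃ W ∈ F, W).Finite := by
            have hss : S ∩ ⋃ W ∈ F, W ⊆ ⋃ W ∈ (F : Set (Set ℕ)), S ∩ W := by
              rintro x ⟨hxS, hxU⟩
              rw [Set.mem_iUnion₂] at hxU ⊢
              obtain ⟨W, hW, hxW⟩ := hxU
              exact ⟨W, hW, hxS, hxW⟩
            exact (Set.Finite.biUnion F.finite_toSet
              (fun W hW => hSC W (hFA hW))).subset hss
          have hss2 : S \ (S ∩ ⋃ W ∈ F, W) ⊆ S \ ⋃ W ∈ F, W := by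
            rintro x ⟨hxS, hx2⟩
            exact ⟨hxS, fun h => hx2 ⟨hxS, h⟩⟩
          exact (hSinf.diff hfin1).mono hss2
        · have hF₀ : ↑(F.erase S) ⊆ A \ {Z} := by
            intro W hW
            rw [Finset.coe_erase, Set.mem_diff] at hW
            obtain ⟨hWF, hWS⟩ := hW
            rcases hF hWF with ⟨hW1, hW2⟩
            rcases hW1 with rfl | hWA
            · exact absurd rfl hWS
            · exact ⟨hWA, hW2⟩
          have h1 := hA.2 Z hZA (F.erase S) hF₀
          have h2 : (S ∩ Z).Finite := hSC Z hZA
          have hsub2 : (Z \ ⋃ W ∈ F.erase S, W) \ (S ∩ Z) ⊆ Z \ ⋃ W ∈ F, W := by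
            rintro x ⟨⟨hxZ, hxF₀⟩, hxSZ⟩
            refine ⟨hxZ, ?_⟩
            intro h
            rw [Set.mem_iUnion₂] at h
            obtain ⟨W, hW, hxW⟩ := h
            by_cases hWS : W = S
            · exact hxSZ ⟨hWS ▸ hxW, hxZ⟩
            · exact hxF₀ (Set.mem_iUnion₂.mpr ⟨W, Finset.mem_erase.mpr ⟨hWS, hW⟩, hxW⟩)
          exact (h1.diff h2).mono hsub2
    have heqA := hmax.2 _ hind (Set.subset_insert _ _)
    exact hSA (by rw [← heqA]; exact Set.mem_insert _ _)
  · intro h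
    refine ⟨hA, ?_⟩
    intro B hB hAB
    by_contra hne
    have hex : ∃ X ∈ B, X ∉ A := by
      by_contra h'
      push_neg at h'
      exact hne (Set.Subset.antisymm h' hAB)
    obtain ⟨X, hXB, hXA⟩ := hex
    have hXinf := hB.1 X hXB
    rcases h X hXinf with ⟨F, hF, hfin⟩ | ⟨C, hCA, hCf⟩
    · refine hB.2 X hXB F ?_ hfin
      intro Y hY
      exact ⟨hAB (hF hY), fun he => hXA (he ▸ hF hY)⟩
    · rw [mem_complFilter] at hCf
      obtain ⟨𝓑, h𝓑, hsub⟩ := hCf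
      have hXC : X ≠ C := fun he => hXA (he ▸ hCA)
      refine hB.2 C (hAB hCA) (insert X 𝓑) ?_ ?_
      · intro Z hZ
        rcases Finset.mem_insert.mp (by exact_mod_cast hZ) with rfl | hZ'
        · exact ⟨hXB, hXC⟩
        · obtain ⟨h1, h2⟩ := h𝓑 hZ'
          exact ⟨hAB h1, h2⟩
      · have hemp : C \ ⋃ Y ∈ insert X 𝓑, Y = ∅ := by
          ext x
          simp only [Set.mem_diff, Set.mem_empty_iff_false, iff_false, not_and, not_not]
          intro hxC
          by_cases hx𝓑 : x ∈ ⋃ Y ∈ 𝓑, Y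
          · rw [Set.mem_iUnion₂] at hx𝓑
            obtain ⟨W, hW, hxW⟩ := hx𝓑
            exact Set.mem_iUnion₂.mpr ⟨W, Finset.mem_insert_of_mem hW, hxW⟩
          · exact Set.mem_iUnion₂.mpr ⟨X, Finset.mem_insert_self X 𝓑, hsub ⟨hxC, hx𝓑⟩⟩
        rw [hemp]
        exact Set.finite_empty
end

section
/- If $\mathcal{A}$ is a maximal ideal independent family, then $\mathcal{A}$ is maximal $\mathcal{J}(\mathcal{A})$-almost disjoint; that is, there is no $B \in \mathcal{J}(\mathcal{A})^+ \setminus \mathcal{A}$ with $B \cap A \in \mathcal{J}(\mathcal{A})$ for all $A \in \mathcal{A}$. -/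
lemma idealJ_mono {A : Set (Set ℕ)} {S T : Set ℕ} (h : S ⊆ T) (hT : T ∈ idealJ A) :
    S ∈ idealJ A := by
  obtain ⟨F, hF, hfin⟩ := hT
  exact ⟨F, hF, hfin.subset (Set.diff_subset_diff_left h)⟩

lemma idealJ_finite {A : Set (Set ℕ)} {S : Set ℕ} (h : S.Finite) : S ∈ idealJ A :=
  ⟨∅, by simp, by simpa using h⟩

lemma idealJ_union {A : Set (Set ℕ)} {S T : Set ℕ} (hS : S ∈ idealJ A) (hT : T ∈ idealJ A) :
    S ∪ T ∈ idealJ A := by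
  classical
  obtain ⟨F, hF, hFf⟩ := hS
  obtain ⟨G, hG, hGf⟩ := hT
  refine ⟨F ∪ G, ?_, ?_⟩
  · intro p hp
    rcases Finset.mem_union.1 hp with h | h
    exacts [hF p h, hG p h]
  · refine (hFf.union hGf).subset ?_
    intro n hn
    rcases hn.1 with h | h
    · left; exact ⟨h, fun hc => hn.2 (by
        simp only [Set.mem_iUnion] at hc ⊢
        obtain ⟨p, hp, hm⟩ := hc
        exact ⟨p, Finset.mem_union_left _ hp, hm⟩)⟩
    · right; exact ⟨h, fun hc => hn.2 (by
        simp only [Set.mem_iUnion] at hc ⊢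
        obtain ⟨p, hp, hm⟩ := hc
        exact ⟨p, Finset.mem_union_right _ hp, hm⟩)⟩

lemma idealJ_biUnion {A : Set (Set ℕ)} (F : Finset (Set ℕ)) (f : Set ℕ → Set ℕ)
    (h : ∀ Y ∈ F, f Y ∈ idealJ A) : (⋃ Y ∈ F, f Y) ∈ idealJ A := by
  classical
  induction F using Finset.induction_on with
  | empty => simpa using idealJ_finite (A := A) Set.finite_empty
  | @insert a s hx ih =>
    rw [Finset.set_biUnion_insert]
    exact idealJ_union (h a (Finset.mem_insert_self a s))
      (ih fun Y hY => h Y (Finset.mem_insert_of_mem hY))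


/-- A maximal ideal independent family is maximal `𝓙(A)`-almost disjoint. -/
theorem stmt5 (A : Set (Set ℕ)) (hA : MaximalIdealIndependent A) :
    ¬ ∃ B : Set ℕ, B ∉ idealJ A ∧ B ∉ A ∧ ∀ X ∈ A, B ∩ X ∈ idealJ A := by
  classical
  rintro ⟨B, hBJ, hBA, hBint⟩
  have hBinf : B.Infinite := by
    intro hfin
    exact hBJ (idealJ_finite hfin)
  have hII : IdealIndependent (insert B A) := by
    constructor
    · rintro X (rfl | hX)
      · exact hBinf
      · exact hA.1.1 X hX
    · intro X hX' F hF
      rcases hX' with rfl | hX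
      · -- X = B
        have hFA : ↑F ⊆ A \ {X} := by
          intro Y hY
          obtain ⟨hY1, hY2⟩ := hF hY
          rcases hY1 with rfl | hY1
          · exact absurd rfl hY2
          · exact ⟨hY1, hY2⟩
        by_contra hfin
        rw [Set.not_infinite] at hfin
        apply hBJ
        have hsub : X ⊆ (X \ ⋃ Y ∈ F, Y) ∪ ⋃ Y ∈ F, (X ∩ Y) := by
          intro n hn
          by_cases hc : n ∈ ⋃ Y ∈ F, Y
          · right
            simp only [Set.mem_iUnion] at hc ⊢
            obtain ⟨Y, hY, hm⟩ := hc
            exact ⟨Y, hY, hn, hm⟩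
          · left; exact ⟨hn, hc⟩
        refine idealJ_mono hsub (idealJ_union (idealJ_finite hfin) ?_)
        refine idealJ_biUnion F _ fun Y hY => ?_
        exact hBint Y ((hFA hY).1)
      · -- X ∈ A
        have hXB : X ≠ B := fun h => hBA (h ▸ hX)
        set F' := F.erase B with hF'def
        have hF'A : ↑F' ⊆ A \ {X} := by
          intro Y hY
          have hYF : Y ∈ F := Finset.mem_of_mem_erase hY
          have hYB : Y ≠ B := Finset.ne_of_mem_erase hY
          have := hF hYF
          rcases this.1 with rfl | hYA
          · exact absurd rfl hYB
          · exact ⟨hYA, this.2⟩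
        obtain ⟨G, hG, hGf⟩ := hBint X hX
        set g : Set ℕ × Set ℕ → Set ℕ := fun p => if p.1 = X then p.2 else p.1 with hg
        have hgA : ∀ p ∈ G, g p ∈ A \ {X} := by
          intro p hp
          obtain ⟨h1, h2, hne⟩ := hG p hp
          by_cases hc : p.1 = X
          · refine ⟨by simp [hg, hc, h2], ?_⟩
            simp only [hg, hc, if_pos rfl, Set.mem_singleton_iff]
            exact fun h => hne (hc.trans h.symm)
          · exact ⟨by simp [hg, hc, h1], by simp [hg, hc]⟩
        have hgsub : ∀ p ∈ G, p.1 ∩ p.2 ⊆ g p := by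
          intro p hp n hn
          by_cases hc : p.1 = X
          · simpa [hg, hc] using hn.2
          · simpa [hg, hc] using hn.1
        set H := F' ∪ G.image g with hH
        have hHA : ↑H ⊆ A \ {X} := by
          intro Y hY
          simp only [hH, Finset.coe_union, Set.mem_union, Finset.coe_image,
            Set.mem_image] at hY
          rcases hY with hY | ⟨p, hp, rfl⟩
          · exact hF'A hY
          · exact hgA p hp
        have hinf : (X \ ⋃ Y ∈ H, Y).Infinite := hA.1.2 X hX H hHA
        set K := (B ∩ X) \ ⋃ p ∈ G, p.1 ∩ p.2 with hK
        have hsub : (X \ ⋃ Y ∈ H, Y) \ K ⊆ X \ ⋃ Y ∈ F, Y := by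
          rintro n ⟨⟨hnX, hnH⟩, hnK⟩
          refine ⟨hnX, fun hc => ?_⟩
          simp only [Set.mem_iUnion] at hc
          obtain ⟨Y, hYF, hnY⟩ := hc
          by_cases hYB : Y = B
          · subst hYB
            have hnG : n ∈ ⋃ p ∈ G, p.1 ∩ p.2 := by
              by_contra hcc
              exact hnK ⟨⟨hnY, hnX⟩, hcc⟩
            simp only [Set.mem_iUnion] at hnG
            obtain ⟨p, hp, hm⟩ := hnG
            apply hnH
            simp only [Set.mem_iUnion]
            exact ⟨g p, Finset.mem_union_right _ (Finset.mem_image_of_mem g hp),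
              hgsub p hp hm⟩
          · apply hnH
            simp only [Set.mem_iUnion]
            exact ⟨Y, Finset.mem_union_left _ (Finset.mem_erase_of_ne_of_mem hYB hYF), hnY⟩
        exact ((hinf.diff hGf).mono hsub)
  have := hA.2 (insert B A) hII (Set.subset_insert B A)
  exact hBA (this ▸ Set.mem_insert B A)
end

section
/- An ideal independent family $\mathcal{A}$ is maximal if and only if $\mathcal{A}$ is maximal $\mathcal{J}(\mathcal{A})$-almost disjoint and $\mathcal{J}(\mathcal{A})$-completely separable. -/
open Set
attribute [local instance] Classical.propDecidable

lemma finJ {A : Set (Set ℕ)} {X : Set ℕ} (h : X.Finite) : X ∈ idealJ A :=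
  ⟨∅, by simp, by simpa using h⟩

lemma subJ {A : Set (Set ℕ)} {X Y : Set ℕ} (hXY : Y ⊆ X) (hX : X ∈ idealJ A) :
    Y ∈ idealJ A := by
  obtain ⟨F, h1, h2⟩ := hX
  exact ⟨F, h1, h2.subset (diff_subset_diff_left hXY)⟩

lemma unionJ {A : Set (Set ℕ)} {X Y : Set ℕ} (hX : X ∈ idealJ A) (hY : Y ∈ idealJ A) :
    X ∪ Y ∈ idealJ A := by
  obtain ⟨F, hF1, hF2⟩ := hX; obtain ⟨G, hG1, hG2⟩ := hY
  refine ⟨F ∪ G, ?_, (hF2.union hG2).subset ?_⟩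
  · intro p hp
    rcases Finset.mem_union.1 hp with h | h
    exacts [hF1 p h, hG1 p h]
  · intro x hx
    obtain ⟨hx1, hx2⟩ := hx
    simp only [mem_iUnion, exists_prop, not_exists, not_and, Finset.mem_union] at hx2
    rcases hx1 with h | h
    · refine Or.inl ⟨h, ?_⟩
      simp only [mem_iUnion, exists_prop, not_exists, not_and]
      exact fun p hp => hx2 p (Or.inl hp)
    · refine Or.inr ⟨h, ?_⟩
      simp only [mem_iUnion, exists_prop, not_exists, not_and]
      exact fun p hp => hx2 p (Or.inr hp)

lemma covJ {A : Set (Set ℕ)} {X : Set ℕ} (h : X ∈ idealJ A) :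
    ∃ F : Finset (Set ℕ), ↑F ⊆ A ∧ (X \ ⋃ Y ∈ F, Y).Finite := by
  obtain ⟨G, hG1, hG2⟩ := h
  refine ⟨G.image Prod.fst, ?_, hG2.subset (diff_subset_diff_right ?_)⟩
  · intro Y hY
    simp only [Finset.coe_image, mem_image, Finset.mem_coe] at hY
    obtain ⟨p, hp, rfl⟩ := hY
    exact (hG1 p hp).1
  · intro x hx
    simp only [mem_iUnion, exists_prop] at hx ⊢
    obtain ⟨p, hp, hx1, _⟩ := hx
    exact ⟨p.1, Finset.mem_image_of_mem _ hp, hx1⟩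

lemma covJavoid {A : Set (Set ℕ)} {X : Set ℕ} (C : Set ℕ) (h : X ∈ idealJ A) :
    ∃ F : Finset (Set ℕ), ↑F ⊆ A \ {C} ∧ ((X ∩ C) \ ⋃ Y ∈ F, Y).Finite := by
  obtain ⟨G, hG1, hG2⟩ := h
  refine ⟨G.image (fun p => if p.1 = C then p.2 else p.1), ?_, hG2.subset ?_⟩
  · intro Y hY
    simp only [Finset.coe_image, mem_image, Finset.mem_coe] at hY
    obtain ⟨p, hp, rfl⟩ := hY
    obtain ⟨h1, h2, h3⟩ := hG1 p hp
    by_cases hc : p.1 = C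
    · rw [if_pos hc]
      refine ⟨h2, fun he => ?_⟩
      rw [mem_singleton_iff] at he
      exact h3 (by rw [hc, he])
    · rw [if_neg hc]
      exact ⟨h1, hc⟩
  · rintro x ⟨⟨hx1, hxC⟩, hx2⟩
    refine ⟨hx1, fun hmem => hx2 ?_⟩
    simp only [mem_iUnion, exists_prop] at hmem ⊢
    obtain ⟨p, hp, hp1, hp2⟩ := hmem
    refine ⟨if p.1 = C then p.2 else p.1, Finset.mem_image_of_mem _ hp, ?_⟩
    by_cases hc : p.1 = C <;> simp [hc, hp1, hp2]

lemma intoJ {A : Set (Set ℕ)} {C X : Set ℕ} (hC : C ∈ A) (F : Finset (Set ℕ))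
    (hF : ↑F ⊆ A \ {C}) (hXC : X ⊆ C) (hfin : (X \ ⋃ Y ∈ F, Y).Finite) :
    X ∈ idealJ A := by
  refine ⟨F.image (fun Y => (C, Y)), ?_, hfin.subset ?_⟩
  · intro p hp
    simp only [Finset.mem_image] at hp
    obtain ⟨Y, hY, rfl⟩ := hp
    exact ⟨hC, (hF hY).1, fun he => (hF hY).2 he.symm⟩
  · rintro x ⟨hx1, hx2⟩
    refine ⟨hx1, fun hmem => hx2 ?_⟩
    simp only [mem_iUnion, exists_prop, mem_inter_iff] at hmem ⊢
    obtain ⟨p, hp, hpx⟩ := hmem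
    exact ⟨(C, p), Finset.mem_image_of_mem _ hp, hXC hx1, hpx⟩

lemma monoII {A B : Set (Set ℕ)} (h : IdealIndependent B) (hAB : A ⊆ B) :
    IdealIndependent A :=
  ⟨fun X hX => h.1 X (hAB hX),
   fun X hX F hF => h.2 X (hAB hX) F (hF.trans (diff_subset_diff_left hAB))⟩

lemma infOfNotJ {A : Set (Set ℕ)} {B : Set ℕ} (h : B ∉ idealJ A) : B.Infinite := by
  by_contra hf
  rw [Set.not_infinite] at hf
  exact h (finJ hf)

lemma biUnionInterJ {A : Set (Set ℕ)} {B : Set ℕ} (F : Finset (Set ℕ))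
    (h : ∀ Y ∈ F, B ∩ Y ∈ idealJ A) : (B ∩ ⋃ Y ∈ F, Y) ∈ idealJ A := by
  induction F using Finset.induction with
  | empty => exact finJ (by simp)
  | @insert a F ha ih =>
    rw [Finset.set_biUnion_insert, Set.inter_union_distrib_left]
    exact unionJ (h a (Finset.mem_insert_self a F))
      (ih fun Y hY => h Y (Finset.mem_insert_of_mem hY))

theorem fwd (A : Set (Set ℕ)) (hA : IdealIndependent A) (h : MaximalIdealIndependent A) :
      ((∀ B : Set ℕ, B ∉ idealJ A → B ∉ A → ∃ X ∈ A, B ∩ X ∉ idealJ A) ∧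
       (∀ X : Set ℕ, X.Infinite → {B | B ∈ A ∧ X ∩ B ∉ idealJ A}.Infinite →
          ∃ C ∈ A, C \ X ∈ idealJ A)) := by
  constructor
  · -- maximal J-AD
    intro B hBJ hBA
    by_contra hcon
    push_neg at hcon
    have hII : IdealIndependent (insert B A) := by
      constructor
      · intro X hX
        rcases Set.mem_insert_iff.1 hX with rfl | hX
        · exact infOfNotJ hBJ
        · exact hA.1 X hX
      · intro X hX F hF
        rcases Set.mem_insert_iff.1 hX with rfl | hX
        · -- X = B
          have hFA : ↑F ⊆ A := by
            intro Y hY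
            rcases Set.mem_insert_iff.1 (hF hY).1 with rfl | hh
            · exact absurd rfl ((hF hY).2)
            · exact hh
          by_contra hfin
          rw [Set.not_infinite] at hfin
          apply hBJ
          have h1 : (X ∩ ⋃ Y ∈ F, Y) ∈ idealJ A :=
            biUnionInterJ F (fun Y hY => hcon Y (hFA hY))
          refine subJ (fun x hx => ?_) (unionJ (finJ hfin) h1)
          by_cases hxu : x ∈ ⋃ Y ∈ F, Y
          · exact Or.inr ⟨hx, hxu⟩
          · exact Or.inl ⟨hx, hxu⟩
        · -- X ∈ A
          by_cases hBF : B ∈ F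
          · have hF' : ↑(F.erase B) ⊆ A \ {X} := by
              intro Y hY
              have hY1 := Finset.mem_coe.1 hY
              have hYB := Finset.ne_of_mem_erase hY1
              have hYF := Finset.mem_of_mem_erase hY1
              rcases Set.mem_insert_iff.1 (hF hYF).1 with rfl | hh
              · exact absurd rfl hYB
              · exact ⟨hh, (hF hYF).2⟩
            obtain ⟨G, hG1, hG2⟩ := covJavoid X (hcon X hX)
            by_contra hfin
            rw [Set.not_infinite] at hfin
            rw [← Finset.insert_erase hBF, Finset.set_biUnion_insert] at hfin
            have key : (X \ ⋃ Y ∈ (F.erase B ∪ G), Y).Finite := by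
              refine (hfin.union hG2).subset ?_
              rintro x ⟨hx1, hx2⟩
              rw [Finset.set_biUnion_union] at hx2
              by_cases hxB : x ∈ B
              · exact Or.inr ⟨⟨⟨hxB, hx1⟩, hx1⟩, fun hu => hx2 (Or.inr hu)⟩
              · refine Or.inl ⟨hx1, fun hu => ?_⟩
                rcases hu with hu | hu
                · exact hxB hu
                · exact hx2 (Or.inl hu)
            have hFG : ↑(F.erase B ∪ G) ⊆ A \ {X} := by
              intro Y hY
              rcases Finset.mem_union.1 (Finset.mem_coe.1 hY) with hh | hh
              · exact hF' hh
              · exact hG1 hh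
            exact absurd (hA.2 X hX _ hFG) (Set.not_infinite.2 key)
          · refine hA.2 X hX F ?_
            intro Y hY
            rcases Set.mem_insert_iff.1 (hF hY).1 with rfl | hh
            · exact absurd (Finset.mem_coe.1 hY) hBF
            · exact ⟨hh, (hF hY).2⟩
    have heq := h.2 (insert B A) hII (Set.subset_insert B A)
    exact hBA (heq ▸ Set.mem_insert B A)
  · -- completely separable
    intro X hXinf hS
    by_cases hXA : X ∈ A
    · exact ⟨X, hXA, finJ (by simp)⟩
    by_contra hcon
    push_neg at hcon
    have hII : IdealIndependent (insert X A) := by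
      constructor
      · intro Y hY
        rcases Set.mem_insert_iff.1 hY with rfl | hY
        · exact hXinf
        · exact hA.1 Y hY
      · intro Y hY F hF
        rcases Set.mem_insert_iff.1 hY with rfl | hY
        · -- Y = X
          have hFA : ↑F ⊆ A := by
            intro Z hZ
            rcases Set.mem_insert_iff.1 (hF hZ).1 with rfl | hh
            · exact absurd rfl ((hF hZ).2)
            · exact hh
          by_contra hfin
          rw [Set.not_infinite] at hfin
          obtain ⟨B, hB, hBF⟩ := hS.exists_notMem_finset F
          apply hB.2
          refine intoJ hB.1 F ?_ Set.inter_subset_right (hfin.subset ?_)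
          · intro Z hZ
            refine ⟨hFA hZ, fun he => hBF ?_⟩
            rw [Set.mem_singleton_iff] at he
            exact Finset.mem_coe.1 (he ▸ hZ)
          · exact Set.diff_subset_diff_left Set.inter_subset_left
        · -- Y ∈ A
          by_cases hXF : X ∈ F
          · have hF' : ↑(F.erase X) ⊆ A \ {Y} := by
              intro Z hZ
              have hZ1 := Finset.mem_coe.1 hZ
              have hZX := Finset.ne_of_mem_erase hZ1
              have hZF := Finset.mem_of_mem_erase hZ1
              rcases Set.mem_insert_iff.1 (hF hZF).1 with rfl | hh
              · exact absurd rfl hZX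
              · exact ⟨hh, (hF hZF).2⟩
            by_contra hfin
            rw [Set.not_infinite] at hfin
            rw [← Finset.insert_erase hXF, Finset.set_biUnion_insert] at hfin
            refine hcon Y hY (intoJ hY (F.erase X) hF' Set.diff_subset (hfin.subset ?_))
            rintro x ⟨⟨hx1, hx2⟩, hx3⟩
            exact ⟨hx1, fun hu => hx3 (by rcases hu with hu | hu; exacts [absurd hu hx2, hu])⟩
          · refine hA.2 Y hY F ?_
            intro Z hZ
            rcases Set.mem_insert_iff.1 (hF hZ).1 with rfl | hh
            · exact absurd (Finset.mem_coe.1 hZ) hXF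
            · exact ⟨hh, (hF hZ).2⟩
    have heq := h.2 (insert X A) hII (Set.subset_insert X A)
    exact hXA (heq ▸ Set.mem_insert X A)

theorem bwd (A : Set (Set ℕ)) (hA : IdealIndependent A)
    (h : (∀ B : Set ℕ, B ∉ idealJ A → B ∉ A → ∃ X ∈ A, B ∩ X ∉ idealJ A) ∧
       (∀ X : Set ℕ, X.Infinite → {B | B ∈ A ∧ X ∩ B ∉ idealJ A}.Infinite →
          ∃ C ∈ A, C \ X ∈ idealJ A)) : MaximalIdealIndependent A := by
  refine ⟨hA, fun B' hB' hAB => ?_⟩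
  refine Set.Subset.antisymm (fun Z hZ => ?_) hAB
  by_contra hZA
  have hI : IdealIndependent (insert Z A) := monoII hB' (Set.insert_subset hZ hAB)
  have hsubZ : ∀ Y ∈ A, Y ∈ insert Z A \ {Z} :=
    fun Y hY => ⟨Set.mem_insert_of_mem _ hY, fun he => hZA (he ▸ hY)⟩
  have hZJ : Z ∉ idealJ A := by
    intro hJ
    obtain ⟨F, hF1, hF2⟩ := covJ hJ
    exact absurd (hI.2 Z (Set.mem_insert Z A) F (fun Y hY => hsubZ Y (hF1 hY)))
      (Set.not_infinite.2 hF2)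
  have hSinf : {B | B ∈ A ∧ Z ∩ B ∉ idealJ A}.Infinite := by
    by_contra hSfin
    rw [Set.not_infinite] at hSfin
    set F0 := hSfin.toFinset with hF0def
    have hF0S : ∀ Y, Y ∈ F0 ↔ (Y ∈ A ∧ Z ∩ Y ∉ idealJ A) := fun Y => hSfin.mem_toFinset
    have hsub0 : ↑F0 ⊆ insert Z A \ {Z} := fun Y hY => hsubZ Y ((hF0S Y).1 hY).1
    set Zs := Z \ ⋃ Y ∈ F0, Y with hZsdef
    have hZsInf : Zs.Infinite := hI.2 Z (Set.mem_insert Z A) F0 hsub0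
    have hZsJ : Zs ∉ idealJ A := by
      intro hJ
      obtain ⟨G, hG1, hG2⟩ := covJ hJ
      refine absurd (hI.2 Z (Set.mem_insert Z A) (F0 ∪ G) ?_) (Set.not_infinite.2 (hG2.subset ?_))
      · intro Y hY
        rcases Finset.mem_union.1 (Finset.mem_coe.1 hY) with hh | hh
        · exact hsub0 hh
        · exact hsubZ Y (hG1 hh)
      · rintro x ⟨hx1, hx2⟩
        rw [Finset.set_biUnion_union] at hx2
        exact ⟨⟨hx1, fun hu => hx2 (Or.inl hu)⟩, fun hu => hx2 (Or.inr hu)⟩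
    have hZsA : Zs ∉ A := by
      intro hmem
      have hne : Zs ≠ Z := fun he => hZA (he ▸ hmem)
      have hsub1 : ↑(insert Zs F0) ⊆ insert Z A \ {Z} := by
        intro Y hY
        rcases Finset.mem_insert.1 (Finset.mem_coe.1 hY) with he | hh
        · rw [he]; exact hsubZ Zs hmem
        · exact hsub0 hh
      obtain ⟨x, hx1, hx2⟩ := (hI.2 Z (Set.mem_insert Z A) (insert Zs F0) hsub1).nonempty
      rw [Finset.set_biUnion_insert] at hx2
      by_cases hxu : x ∈ ⋃ Y ∈ F0, Y
      · exact hx2 (Or.inr hxu)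
      · exact hx2 (Or.inl ⟨hx1, hxu⟩)
    obtain ⟨X, hXA, hXJ⟩ := h.1 Zs hZsJ hZsA
    apply hXJ
    by_cases hXS : Z ∩ X ∈ idealJ A
    · exact subJ (Set.inter_subset_inter_left X Set.diff_subset) hXS
    · have hXF0 : X ∈ F0 := (hF0S X).2 ⟨hXA, hXS⟩
      refine finJ (Set.finite_empty.subset ?_)
      rintro x ⟨hx1, hx2⟩
      refine hx1.2 ?_
      simp only [Set.mem_iUnion, exists_prop]
      exact ⟨X, hXF0, hx2⟩
  obtain ⟨C, hCA, hCJ⟩ := h.2 Z (infOfNotJ hZJ) hSinf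
  obtain ⟨G, hG1, hG2⟩ := covJavoid C hCJ
  have hZC : Z ≠ C := fun he => hZA (he ▸ hCA)
  have hsub2 : ↑(insert Z G) ⊆ insert Z A \ {C} := by
    intro Y hY
    rcases Finset.mem_insert.1 (Finset.mem_coe.1 hY) with he | hh
    · rw [he]; exact ⟨Set.mem_insert Z A, hZC⟩
    · exact ⟨Set.mem_insert_of_mem _ (hG1 hh).1, (hG1 hh).2⟩
  refine absurd (hI.2 C (Set.mem_insert_of_mem _ hCA) (insert Z G) hsub2)
    (Set.not_infinite.2 (hG2.subset ?_))
  rintro x ⟨hx1, hx2⟩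
  rw [Finset.set_biUnion_insert] at hx2
  exact ⟨⟨⟨hx1, fun hu => hx2 (Or.inl hu)⟩, hx1⟩, fun hu => hx2 (Or.inr hu)⟩

/-- An ideal independent family `A` is maximal iff it is maximal `𝓙(A)`-almost disjoint
and `𝓙(A)`-completely separable. -/
theorem stmt6 (A : Set (Set ℕ)) (hA : IdealIndependent A) :
    MaximalIdealIndependent A ↔
      ((∀ B : Set ℕ, B ∉ idealJ A → B ∉ A → ∃ X ∈ A, B ∩ X ∉ idealJ A) ∧
       (∀ X : Set ℕ, X.Infinite → {B | B ∈ A ∧ X ∩ B ∉ idealJ A}.Infinite →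
          ∃ C ∈ A, C \ X ∈ idealJ A)) :=
  ⟨fwd A hA, bwd A hA⟩
end

section
/- For a maximal $\mathcal{J}$-almost disjoint family $\mathcal{A}$, the sets $\mathcal{A}^{+_{\mathcal{J}}}$ and $\mathcal{A}^{++_{\mathcal{J}}}$ coincide. -/
/-- For a maximal `J`-almost disjoint family `A`, the sets `A⁺ᴶ` and `A⁺⁺ᴶ` coincide. -/
theorem stmt9 (J : Set (Set ℕ)) (A : Set (Set ℕ))
    (hFin : ∀ S : Set ℕ, S.Finite → S ∈ J)
    (hDown : ∀ S T : Set ℕ, S ⊆ T → T ∈ J → S ∈ J)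
    (hUnion : ∀ S T : Set ℕ, S ∈ J → T ∈ J → S ∪ T ∈ J)
    (hProper : (Set.univ : Set ℕ) ∉ J)
    (hPos : ∀ X ∈ A, X ∉ J)
    (hAD : ∀ X ∈ A, ∀ Y ∈ A, X ≠ Y → X ∩ Y ∈ J)
    (hMax : ∀ X : Set ℕ, X ∉ J → X ∉ A → ∃ B ∈ A, X ∩ B ∉ J) :
    {X : Set ℕ | X.Infinite ∧ ∀ F : Finset (Set ℕ), ↑F ⊆ A → (X \ ⋃ Y ∈ F, Y) ∉ J} =
    {X : Set ℕ | X.Infinite ∧ {B | B ∈ A ∧ X ∩ B ∉ J}.Infinite} := by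
  have hBU : ∀ (F : Finset (Set ℕ)) (g : Set ℕ → Set ℕ),
      (∀ Y ∈ F, g Y ∈ J) → (⋃ Y ∈ F, g Y) ∈ J := by
    intro F g
    classical
    induction F using Finset.induction_on with
    | empty => intro _; simpa using hFin ∅ Set.finite_empty
    | insert _ _ hx ih =>
      intro h
      rw [Finset.set_biUnion_insert]
      exact hUnion _ _ (h _ (Finset.mem_insert_self _ _))
        (ih fun Y hY => h Y (Finset.mem_insert_of_mem hY))
  ext X
  simp only [Set.mem_setOf_eq]
  constructor
  · rintro ⟨hXinf, hplus⟩
    refine ⟨hXinf, ?_⟩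
    by_contra hfin
    rw [Set.not_infinite] at hfin
    have hFsub : ↑hfin.toFinset ⊆ A := by
      intro B hB
      simp only [Set.Finite.coe_toFinset] at hB
      exact hB.1
    set Y := X \ ⋃ B ∈ hfin.toFinset, B with hYdef
    have hY : Y ∉ J := hplus _ hFsub
    have hYsubX : Y ⊆ X := Set.diff_subset
    have hYB : ∀ B ∈ A, Y ∩ B ∈ J := by
      intro B hB
      by_cases hBS : B ∈ {B | B ∈ A ∧ X ∩ B ∉ J}
      · have hE : Y ∩ B = ∅ := by
          ext n
          simp only [Set.mem_inter_iff, Set.mem_empty_iff_false, iff_false, not_and]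
          rintro hn hnB
          exact hn.2 (Set.mem_biUnion (hfin.mem_toFinset.mpr hBS) hnB)
        rw [hE]; exact hFin ∅ Set.finite_empty
      · have hXB : X ∩ B ∈ J := by
          by_contra h
          exact hBS ⟨hB, h⟩
        exact hDown _ _ (Set.inter_subset_inter_left _ hYsubX) hXB
    have hYA : Y ∉ A := by
      intro hYA
      have := hYB Y hYA
      rw [Set.inter_self] at this
      exact hY this
    obtain ⟨B, hB, hYBnJ⟩ := hMax Y hY hYA
    exact hYBnJ (hYB B hB)
  · rintro ⟨hXinf, hSinf⟩
    refine ⟨hXinf, ?_⟩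
    intro F hF hJ
    obtain ⟨B, hBS, hBF⟩ := hSinf.exists_notMem_finset F
    apply hBS.2
    have h1 : X ∩ B ⊆ (X \ ⋃ Y ∈ F, Y) ∪ (⋃ Y ∈ F, B ∩ Y) := by
      rintro n ⟨hnX, hnB⟩
      by_cases h : n ∈ ⋃ Y ∈ F, (Y : Set ℕ)
      · right
        obtain ⟨Y, hY, hnY⟩ := Set.mem_iUnion₂.mp h
        exact Set.mem_biUnion hY ⟨hnB, hnY⟩
      · left; exact ⟨hnX, h⟩
    have h2 : (⋃ Y ∈ F, B ∩ Y) ∈ J :=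
      hBU F _ fun Y hY => hAD B hBS.1 Y (hF hY) (fun e => hBF (e ▸ hY))
    exact hDown _ _ h1 (hUnion _ _ hJ h2)
end

section
/- The ultrafilter number $\mathfrak{u}$ is less than or equal to $\mathfrak{s}_{mm}$, the minimal cardinality of an infinite maximal ideal independent family. -/
/-- The ultrafilter number 𝔲: least cardinality of a base of a non-principal
ultrafilter on ω. -/
noncomputable def uNum : Cardinal :=
  sInf {c | ∃ (U : Ultrafilter ℕ) (B : Set (Set ℕ)),
    (∀ S : Set ℕ, S.Finite → S ∉ U) ∧
    (∀ b ∈ B, b ∈ U) ∧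
    (∀ S ∈ U, ∃ b ∈ B, (b \ S).Finite) ∧
    c = Cardinal.mk ↥B}

/-- 𝔰ₘₘ: least cardinality of an infinite maximal ideal independent family. -/
noncomputable def smm : Cardinal :=
  sInf {c | ∃ A : Set (Set ℕ), A.Infinite ∧ MaximalIdealIndependent A ∧ c = Cardinal.mk ↥A}

-- Auxiliary lemmas
lemma genSets_infinite {A : Set (Set ℕ)} (h : IdealIndependent A) {X : Set ℕ} (hX : X ∈ A)
    {b : Set ℕ} (hb : b ∈ genSets A X) : b.Infinite := by
  obtain ⟨F, hF, rfl⟩ := hb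
  exact h.2 X hX F hF

lemma genSets_inter {A : Set (Set ℕ)} {X : Set ℕ} {b₁ b₂ : Set ℕ}
    (h₁ : b₁ ∈ genSets A X) (h₂ : b₂ ∈ genSets A X) : b₁ ∩ b₂ ∈ genSets A X := by
  classical
  obtain ⟨F₁, hF₁, rfl⟩ := h₁
  obtain ⟨F₂, hF₂, rfl⟩ := h₂
  refine ⟨F₁ ∪ F₂, ?_, ?_⟩
  · rw [Finset.coe_union]
    exact Set.union_subset hF₁ hF₂
  · rw [Finset.set_biUnion_union, ← Set.diff_inter_diff]

lemma genSets_self {A : Set (Set ℕ)} {X : Set ℕ} : X ∈ genSets A X := by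
  refine ⟨∅, by simp, by simp⟩

lemma mk_genSets_le {A : Set (Set ℕ)} (hinf : A.Infinite) (X : Set ℕ) :
    Cardinal.mk ↥(genSets A X) ≤ Cardinal.mk ↥A := by
  classical
  have : Infinite ↥A := hinf.to_subtype
  have hchoice : ∀ S : ↥(genSets A X), ∃ F : Finset (Set ℕ),
      ↑F ⊆ A \ {X} ∧ (S : Set ℕ) = X \ ⋃ Y ∈ F, Y := fun S => S.2
  choose Ff hsub heq using hchoice
  let g : ↥(genSets A X) → Finset ↥A := fun S => (Ff S).subtype (· ∈ A)
  have hback : ∀ S, ((Ff S).subtype (· ∈ A)).map (Function.Embedding.subtype _) = Ff S := by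
    intro S
    rw [Finset.subtype_map, Finset.filter_true_of_mem]
    intro x hx
    exact (hsub S hx).1
  have hginj : Function.Injective g := by
    intro S T h
    have h2 : Ff S = Ff T := by
      rw [← hback S, ← hback T]
      simp only [g] at h
      rw [h]
    apply Subtype.ext
    rw [heq S, heq T, h2]
  calc Cardinal.mk ↥(genSets A X) ≤ Cardinal.mk (Finset ↥A) := Cardinal.mk_le_of_injective hginj
    _ = Cardinal.mk ↥A := Cardinal.mk_finset_of_infinite _

lemma uNum_le_of_good {A : Set (Set ℕ)} (hii : IdealIndependent A) (hinf : A.Infinite)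
    {X : Set ℕ} (hX : X ∈ A)
    (hdec : ∀ S : Set ℕ, (∃ b ∈ genSets A X, (b \ S).Finite) ∨
      (∃ b ∈ genSets A X, (b ∩ S).Finite)) :
    uNum ≤ Cardinal.mk ↥A := by
  classical
  set Fl : Filter ℕ :=
    { sets := {S | ∃ b ∈ genSets A X, (b \ S).Finite}
      univ_sets := ⟨X, genSets_self, by simp⟩
      sets_of_superset := by
        rintro S T ⟨b, hb, hfin⟩ hST
        exact ⟨b, hb, hfin.subset (fun x hx => ⟨hx.1, fun h => hx.2 (hST h)⟩)⟩
      inter_sets := by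
        rintro S T ⟨b1, hb1, h1⟩ ⟨b2, hb2, h2⟩
        refine ⟨b1 ∩ b2, genSets_inter hb1 hb2, ((h1.union h2).subset ?_)⟩
        rintro x ⟨⟨hx1, hx2⟩, hx3⟩
        simp only [Set.mem_inter_iff, not_and] at hx3
        by_cases hxS : x ∈ S
        · exact Or.inr ⟨hx2, hx3 hxS⟩
        · exact Or.inl ⟨hx1, hxS⟩ } with hFl
  have hmemFl : ∀ S : Set ℕ, S ∈ Fl ↔ ∃ b ∈ genSets A X, (b \ S).Finite := fun S => Iff.rfl
  have hcompl : ∀ s : Set ℕ, sᶜ ∉ Fl ↔ s ∈ Fl := by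
    intro s
    constructor
    · intro h
      rcases hdec s with h1 | ⟨b, hb, hfin⟩
      · exact (hmemFl s).2 h1
      · exact absurd ((hmemFl sᶜ).2 ⟨b, hb, by simpa [Set.diff_compl] using hfin⟩) h
    · rintro ⟨b, hb, h1⟩ ⟨b', hb', h2⟩
      have hbb : (b ∩ b').Infinite := genSets_infinite hii hX (genSets_inter hb hb')
      apply hbb
      apply (h1.union h2).subset
      rintro x ⟨hxb, hxb'⟩
      by_cases hxs : x ∈ s
      · exact Or.inr ⟨hxb', fun h => h hxs⟩
      · exact Or.inl ⟨hxb, hxs⟩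
  set U : Ultrafilter ℕ := Ultrafilter.ofComplNotMemIff Fl hcompl with hU
  have hmemU : ∀ S : Set ℕ, S ∈ U ↔ S ∈ Fl := fun S => Iff.rfl
  have h1 : uNum ≤ Cardinal.mk ↥(genSets A X) := by
    unfold uNum
    apply csInf_le'
    refine ⟨U, genSets A X, ?_, ?_, ?_, rfl⟩
    · intro S hSfin hSU
      rcases (hmemU S).1 hSU with ⟨b, hb, hfin⟩
      have : b ⊆ (b \ S) ∪ S := fun x hx => by
        by_cases h : x ∈ S
        · exact Or.inr h
        · exact Or.inl ⟨hx, h⟩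
      exact genSets_infinite hii hX hb ((hfin.union hSfin).subset this)
    · intro b hb
      exact (hmemU b).2 ⟨b, hb, by simp⟩
    · intro S hS
      exact (hmemU S).1 hS
  exact h1.trans (mk_genSets_le hinf X)

def bcode (f : ℕ → Bool) (n : ℕ) : ℕ := Encodable.encode (List.ofFn fun i : Fin n => f i)

lemma bcode_eq {f g : ℕ → Bool} {n m : ℕ} (h : bcode f n = bcode g m) :
    n = m ∧ ∀ i, i < n → f i = g i := by
  have hl : (List.ofFn fun i : Fin n => f i) = (List.ofFn fun i : Fin m => g i) :=
    Encodable.encode_injective h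
  have hnm : n = m := by simpa using congrArg List.length hl
  subst hnm
  rw [List.ofFn_inj] at hl
  exact ⟨rfl, fun i hi => congrFun hl ⟨i, hi⟩⟩

lemma bcode_inj (f : ℕ → Bool) : Function.Injective (bcode f) :=
  fun n m h => (bcode_eq h).1

lemma mk_continuum_le_of_bad {A : Set (Set ℕ)}
    (hmax : MaximalIdealIndependent A) (hinf : A.Infinite)
    (hbad : ∀ X ∈ A, ∃ C : Set ℕ, ∀ F : Finset (Set ℕ), ↑F ⊆ A \ {X} →
      ((X \ ⋃ Y ∈ F, Y) ∩ C).Infinite ∧ ((X \ ⋃ Y ∈ F, Y) \ C).Infinite) :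
    Cardinal.mk (ℕ → Bool) ≤ Cardinal.mk ↥A := by
  classical
  obtain ⟨⟨hInfMem, hEsc⟩, hMax⟩ := hmax
  -- a sequence of distinct elements of A
  set e := hinf.natEmbedding with he
  set X : ℕ → Set ℕ := fun n => (e n : Set ℕ) with hXdef
  have hXA : ∀ n, X n ∈ A := fun n => (e n).2
  have hXinj : Function.Injective X := fun n m h => e.injective (Subtype.ext h)
  choose C hC using fun n => hbad (X n) (hXA n)
  set R : ℕ → Set ℕ := fun n => (X n ∩ C n) \ ⋃ k ∈ Finset.range n, X k with hRdef
  have hRX : ∀ n, R n ⊆ X n := fun n x hx => hx.1.1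
  have hRC : ∀ n, R n ⊆ C n := fun n x hx => hx.1.2
  have hRnotX : ∀ {k n : ℕ}, k < n → ∀ {x}, x ∈ R n → x ∉ X k := by
    intro k n hkn x hx hxk
    exact hx.2 (Set.mem_biUnion (Finset.mem_range.2 hkn) hxk)
  -- the union of a finset G of A-sets with the first m X's, as a legal finset for X m
  have hFm : ∀ (m : ℕ) (G : Finset (Set ℕ)), ↑G ⊆ A → X m ∉ G →
      (↑(G ∪ (Finset.range m).image X) : Set (Set ℕ)) ⊆ A \ {X m} := by
    intro m G hGA hXmG x hx
    rw [Finset.coe_union, Set.mem_union] at hx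
    rcases hx with hx | hx
    · refine ⟨hGA hx, fun h => hXmG ?_⟩
      rw [Set.mem_singleton_iff] at h
      subst h
      exact hx
    · rw [Finset.coe_image, Set.mem_image] at hx
      obtain ⟨k, hk, rfl⟩ := hx
      rw [Finset.mem_coe, Finset.mem_range] at hk
      exact ⟨hXA k, fun h => (Nat.ne_of_lt hk) (hXinj (by simpa using h))⟩
  have hUm : ∀ (m : ℕ) (G : Finset (Set ℕ)) (x : ℕ),
      x ∉ (⋃ Y ∈ G ∪ (Finset.range m).image X, Y) →
        (x ∉ (⋃ Y ∈ G, Y) ∧ ∀ k < m, x ∉ X k) := by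
    intro m G x h
    rw [Finset.set_biUnion_union, Set.mem_union] at h
    push_neg at h
    refine ⟨h.1, fun k hk hxk => h.2 ?_⟩
    exact Set.mem_biUnion (Finset.mem_image_of_mem X (Finset.mem_range.2 hk)) hxk
  -- pieces escape any finite union avoiding their index
  have hRfree : ∀ (m : ℕ) (G : Finset (Set ℕ)), ↑G ⊆ A → X m ∉ G →
      (R m \ ⋃ Y ∈ G, Y).Infinite := by
    intro m G hGA hXmG
    have h2 := (hC m (G ∪ (Finset.range m).image X) (hFm m G hGA hXmG)).1
    apply h2.mono
    rintro x ⟨⟨hxX, hxU⟩, hxC⟩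
    obtain ⟨hxG, hxk⟩ := hUm m G x hxU
    refine ⟨⟨⟨hxX, hxC⟩, ?_⟩, hxG⟩
    intro hmem
    simp only [Set.mem_iUnion, Finset.mem_range, exists_prop] at hmem
    obtain ⟨k, hk, hxkk⟩ := hmem
    exact hxk k hk hxkk
  set D : (ℕ → Bool) → Set ℕ := fun f => ⋃ n, R (bcode f n) with hDdef
  have hRD : ∀ f n, R (bcode f n) ⊆ D f := fun f n => Set.subset_iUnion (fun n => R (bcode f n)) n
  -- membership of D f
  have hDmem : ∀ f x, x ∈ D f → ∃ n, x ∈ R (bcode f n) := by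
    intro f x hx
    rwa [Set.mem_iUnion] at hx
  -- inside fix: generators of the X m's are never almost inside D f
  have hInside : ∀ (f : ℕ → Bool) (m : ℕ) (F : Finset (Set ℕ)), ↑F ⊆ A \ {X m} →
      ((X m \ ⋃ Y ∈ F, Y) \ D f).Infinite := by
    intro f m F hFA
    have hFA' : ↑F ⊆ A := fun x hx => (hFA hx).1
    have hXmF : X m ∉ F := fun h => (hFA h).2 rfl
    have h2 := (hC m (F ∪ (Finset.range m).image X) (hFm m F hFA' hXmF)).2
    apply h2.mono
    rintro x ⟨⟨hxX, hxU⟩, hxC⟩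
    obtain ⟨hxF, hxk⟩ := hUm m F x hxU
    refine ⟨⟨hxX, hxF⟩, ?_⟩
    intro hxD
    obtain ⟨n, hn⟩ := hDmem f x hxD
    rcases Nat.lt_trichotomy (bcode f n) m with hlt | heq | hgt
    · exact hxk _ hlt (hRX _ hn)
    · exact hxC (heq ▸ hRC _ hn)
    · exact hRnotX hgt hn hxX
  -- D f escapes every finite union from A
  have hDesc : ∀ (f : ℕ → Bool) (G : Finset (Set ℕ)), ↑G ⊆ A → (D f \ ⋃ Y ∈ G, Y).Infinite := by
    intro f G hGA
    have hex : ∃ n, X (bcode f n) ∉ G := by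
      by_contra hco
      push_neg at hco
      have hrange : Set.range (fun n => X (bcode f n)) ⊆ ↑G := by
        rintro _ ⟨n, rfl⟩
        exact hco n
      exact (Set.infinite_range_of_injective (hXinj.comp (bcode_inj f))) (G.finite_toSet.subset hrange)
    obtain ⟨n, hn⟩ := hex
    exact (hRfree (bcode f n) G hGA hn).mono
      (fun x hx => ⟨hRD f n hx.1, hx.2⟩)
  have hDinf : ∀ f, (D f).Infinite := by
    intro f
    have := hDesc f ∅ (by simp)
    simpa using this
  -- the failure: maximality provides Z outside the X-sequence with a generator almost inside D f
  have hFail : ∀ f : ℕ → Bool, ∃ Z, Z ∈ A ∧ (∀ n, Z ≠ X n) ∧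
      ∃ F : Finset (Set ℕ), ↑F ⊆ A \ {Z} ∧ ((Z \ ⋃ Y ∈ F, Y) \ D f).Finite := by
    intro f
    by_contra hcon
    push_neg at hcon
    have hcon' : ∀ Z, Z ∈ A → (∀ n, Z ≠ X n) → ∀ F : Finset (Set ℕ), ↑F ⊆ A \ {Z} →
        ((Z \ ⋃ Y ∈ F, Y) \ D f).Infinite := by
      intro Z h1 h2 F h3
      exact hcon Z h1 h2 F h3
    have hDne : ∀ n, D f ≠ X n := by
      intro n heq
      have h2 := hInside f n ∅ (by simp)
      rw [← heq] at h2
      apply h2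
      have : (D f \ ⋃ Y ∈ (∅ : Finset (Set ℕ)), Y) \ D f = ∅ := by simp
      rw [this]
      exact Set.finite_empty
    by_cases hDA : D f ∈ A
    · apply hcon (D f) hDA hDne ∅ (by simp)
      have : (D f \ ⋃ Y ∈ (∅ : Finset (Set ℕ)), Y) \ D f = ∅ := by simp
      rw [this]
      exact Set.finite_empty
    · -- extend A by D f, contradicting maximality
      have hii2 : IdealIndependent (insert (D f) A) := by
        constructor
        · rintro Y hY
          rcases Set.mem_insert_iff.1 hY with rfl | hYA
          · exact hDinf f
          · exact hInfMem Y hYA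
        · intro Z hZ F hF
          rcases Set.mem_insert_iff.1 hZ with rfl | hZA
          · -- Z = D f
            have hFA : ↑F ⊆ A := by
              intro x hx
              rcases Set.mem_insert_iff.1 (hF hx).1 with rfl | h
              · exact absurd rfl (hF hx).2
              · exact h
            exact hDesc f F hFA
          · by_cases hDF : D f ∈ F
            · set F' := F.erase (D f) with hF'def
              have hF'A : ↑F' ⊆ A \ {Z} := by
                intro x hx
                rw [Finset.coe_erase, Set.mem_diff] at hx
                obtain ⟨hx1, hx2⟩ := hx
                rcases Set.mem_insert_iff.1 (hF hx1).1 with rfl | h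
                · exact absurd rfl hx2
                · exact ⟨h, (hF hx1).2⟩
              have hUF : (⋃ Y ∈ F, Y) = D f ∪ ⋃ Y ∈ F', Y := by
                conv_lhs => rw [← Finset.insert_erase hDF]
                rw [Finset.set_biUnion_insert]
              have hgoal : Z \ ⋃ Y ∈ F, Y = (Z \ ⋃ Y ∈ F', Y) \ D f := by
                rw [hUF]
                ext x
                simp only [Set.mem_diff, Set.mem_union]
                tauto
              rw [hgoal]
              by_cases hZX : ∃ m, Z = X m
              · obtain ⟨m, rfl⟩ := hZX
                exact hInside f m F' hF'A
              · push_neg at hZX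
                exact hcon' Z hZA hZX F' hF'A
            · have hFA : ↑F ⊆ A \ {Z} := by
                intro x hx
                rcases Set.mem_insert_iff.1 (hF hx).1 with rfl | h
                · exact absurd (Finset.mem_coe.1 hx) hDF
                · exact ⟨h, (hF hx).2⟩
              exact hEsc Z hZA F hFA
      have heqA := hMax _ hii2 (Set.subset_insert _ _)
      rw [← heqA] at hDA
      exact hDA (Set.mem_insert _ _)
  choose Z hZA hZX Bf hBfA hBfD using hFail
  have hZinj : Function.Injective Z := by
    intro f g hfg
    by_contra hne
    have hdiff : ∃ i, f i ≠ g i := by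
      by_contra h
      push_neg at h
      exact hne (funext h)
    obtain ⟨i₀, hi₀⟩ := hdiff
    set T : Finset (Set ℕ) :=
      Bf f ∪ Bf g ∪ (Finset.range (i₀ + 1)).image (fun n => X (bcode f n)) with hTdef
    have hTA : ↑T ⊆ A \ {Z f} := by
      intro x hx
      rw [hTdef, Finset.coe_union, Finset.coe_union, Set.mem_union, Set.mem_union] at hx
      rcases hx with (hx | hx) | hx
      · exact hBfA f hx
      · have := hBfA g hx
        rw [← hfg] at this
        exact this
      · rw [Finset.coe_image, Set.mem_image] at hx
        obtain ⟨n, _, rfl⟩ := hx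
        exact ⟨hXA _, fun h => (hZX f _) ((Set.mem_singleton_iff.1 h).symm)⟩
    have hbig := hEsc (Z f) (hZA f) T hTA
    apply hbig
    have hTsub : ∀ W, W ∈ Bf f ∨ W ∈ Bf g ∨
        (∃ n ≤ i₀, W = X (bcode f n)) → W ∈ T := by
      intro W hW
      rw [hTdef]
      rcases hW with h | h | ⟨n, hn, rfl⟩
      · exact Finset.mem_union_left _ (Finset.mem_union_left _ h)
      · exact Finset.mem_union_left _ (Finset.mem_union_right _ h)
      · exact Finset.mem_union_right _
          (Finset.mem_image_of_mem _ (Finset.mem_range.2 (Nat.lt_succ_of_le hn)))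
    have hsub : (Z f \ ⋃ Y ∈ T, Y) ⊆
        ((Z f \ ⋃ Y ∈ Bf f, Y) \ D f) ∪ ((Z g \ ⋃ Y ∈ Bf g, Y) \ D g) := by
      rintro x ⟨hxZ, hxT⟩
      have hnotBf : x ∉ ⋃ Y ∈ Bf f, Y := by
        intro h
        obtain ⟨Y, hY, hxY⟩ := by simpa only [Set.mem_iUnion, exists_prop] using h
        exact hxT (Set.mem_biUnion (hTsub Y (Or.inl hY)) hxY)
      have hnotBg : x ∉ ⋃ Y ∈ Bf g, Y := by
        intro h
        obtain ⟨Y, hY, hxY⟩ := by simpa only [Set.mem_iUnion, exists_prop] using h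
        exact hxT (Set.mem_biUnion (hTsub Y (Or.inr (Or.inl hY))) hxY)
      by_cases hxD : x ∈ D f
      · -- show x ∉ D g
        right
        refine ⟨⟨hfg ▸ hxZ, hnotBg⟩, ?_⟩
        intro hxDg
        obtain ⟨n, hn⟩ := hDmem f x hxD
        obtain ⟨m, hm⟩ := hDmem g x hxDg
        have hjj : bcode f n = bcode g m := by
          by_contra hne2
          rcases Nat.lt_trichotomy (bcode f n) (bcode g m) with hlt | heq | hgt
          · exact hRnotX hlt hm (hRX _ hn)
          · exact hne2 heq
          · exact hRnotX hgt hn (hRX _ hm)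
        obtain ⟨hnm, hpref⟩ := bcode_eq hjj
        have hni : n ≤ i₀ := by
          by_contra hgt
          push_neg at hgt
          exact hi₀ (hpref i₀ hgt)
        exact hxT (Set.mem_biUnion (hTsub _ (Or.inr (Or.inr ⟨n, hni, rfl⟩))) (hRX _ hn))
      · left
        exact ⟨⟨hxZ, hnotBf⟩, hxD⟩
    exact ((hBfD f).union (hBfD g)).subset hsub
  exact Cardinal.mk_le_of_injective (f := fun f => (⟨Z f, hZA f⟩ : ↥A))
    (fun f g h => hZinj (congrArg Subtype.val h))
lemma uNum_le_continuum : uNum ≤ Cardinal.mk (ℕ → Bool) := by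
  classical
  have hmem : Cardinal.mk ↥{s : Set ℕ | s ∈ Filter.hyperfilter ℕ} ∈
      {c | ∃ (U : Ultrafilter ℕ) (B : Set (Set ℕ)),
        (∀ S : Set ℕ, S.Finite → S ∉ U) ∧
        (∀ b ∈ B, b ∈ U) ∧
        (∀ S ∈ U, ∃ b ∈ B, (b \ S).Finite) ∧
        c = Cardinal.mk ↥B} := by
    refine ⟨Filter.hyperfilter ℕ, {s : Set ℕ | s ∈ Filter.hyperfilter ℕ},
      fun S hS => Filter.notMem_hyperfilter_of_finite hS, fun b hb => hb,
      fun S hS => ⟨S, hS, by simp⟩, rfl⟩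
  have h1 : uNum ≤ Cardinal.mk ↥{s : Set ℕ | s ∈ Filter.hyperfilter ℕ} := by
    unfold uNum
    exact csInf_le' hmem
  refine h1.trans ((Cardinal.mk_set_le _).trans ?_)
  exact Cardinal.mk_le_of_injective (f := fun (s : Set ℕ) (n : ℕ) =>
    @decide (n ∈ s) (Classical.propDecidable _))
    (by
      intro s t h
      ext n
      have := congrFun h n
      exact decide_eq_decide.1 this)

lemma exists_infinite_maximal :
    ∃ A : Set (Set ℕ), A.Infinite ∧ MaximalIdealIndependent A := by
  classical
  set S0 : ℕ → Set ℕ := fun k => {n : ℕ | (Nat.unpair n).1 = k} with hS0def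
  have hS0mem : ∀ k m, Nat.pair k m ∈ S0 k := by
    intro k m
    simp [hS0def, Nat.unpair_pair]
  have hS0inf : ∀ k, (S0 k).Infinite := by
    intro k
    refine Set.infinite_of_injective_forall_mem (f := fun m => Nat.pair k m) ?_ (hS0mem k)
    intro a b h
    have := congrArg (fun n => (Nat.unpair n).2) h
    simpa [Nat.unpair_pair] using this
  have hS0inj : Function.Injective S0 := by
    intro a b h
    have h1 : Nat.pair a 0 ∈ S0 b := h ▸ hS0mem a 0
    simpa [hS0def, Nat.unpair_pair] using h1
  have hS0disj : ∀ {a b : ℕ}, a ≠ b → S0 a ∩ S0 b = ∅ := by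
    intro a b hab
    ext n
    simp only [Set.mem_inter_iff, Set.mem_empty_iff_false, iff_false, not_and]
    intro h1 h2
    exact hab (h1 ▸ h2 ▸ rfl)
  set A0 : Set (Set ℕ) := Set.range S0 with hA0def
  have hA0 : IdealIndependent A0 := by
    constructor
    · rintro Y ⟨k, rfl⟩
      exact hS0inf k
    · rintro Y ⟨k, rfl⟩ F hF
      have heq : S0 k \ ⋃ Y ∈ F, Y = S0 k := by
        ext x
        constructor
        · exact fun h => h.1
        · intro hx
          refine ⟨hx, ?_⟩
          intro hmem
          obtain ⟨Y, hY, hxY⟩ := by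
            simpa only [Set.mem_iUnion, exists_prop] using hmem
          obtain ⟨⟨j, rfl⟩, hne⟩ := hF hY
          have hjk : j ≠ k := fun h => hne (by rw [h]; exact rfl)
          have hdis := hS0disj hjk
          rw [Set.eq_empty_iff_forall_notMem] at hdis
          exact hdis x ⟨hxY, hx⟩
      rw [heq]
      exact hS0inf k
  have hchainCond : ∀ c ⊆ {B : Set (Set ℕ) | IdealIndependent B ∧ A0 ⊆ B},
      IsChain (· ⊆ ·) c → c.Nonempty →
      ∃ ub ∈ {B : Set (Set ℕ) | IdealIndependent B ∧ A0 ⊆ B}, ∀ s ∈ c, s ⊆ ub := by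
    intro c hcS hchain hcne
    refine ⟨⋃₀ c, ⟨?_, ?_⟩, fun s hs => Set.subset_sUnion_of_mem hs⟩
    · constructor
      · rintro Y ⟨B, hBc, hYB⟩
        exact (hcS hBc).1.1 Y hYB
      · intro Z hZ F hF
        have hfin : ∀ t : Finset (Set ℕ), ↑t ⊆ ⋃₀ c → ∃ B ∈ c, ↑t ⊆ B := by
          intro t
          induction t using Finset.induction with
          | empty =>
            intro _
            obtain ⟨B, hB⟩ := hcne
            exact ⟨B, hB, by simp⟩
          | @insert a t ha ih =>
            intro h
            have h1 : a ∈ ⋃₀ c := h (by simp)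
            obtain ⟨B1, hB1c, haB1⟩ := h1
            obtain ⟨B2, hB2c, htB2⟩ := ih (fun x hx => h (by simp [hx]))
            rcases hchain.total hB1c hB2c with h12 | h21
            · refine ⟨B2, hB2c, ?_⟩
              intro x hx
              rw [Finset.coe_insert, Set.mem_insert_iff] at hx
              rcases hx with rfl | hx
              · exact h12 haB1
              · exact htB2 hx
            · refine ⟨B1, hB1c, ?_⟩
              intro x hx
              rw [Finset.coe_insert, Set.mem_insert_iff] at hx
              rcases hx with rfl | hx
              · exact haB1
              · exact h21 (htB2 hx)
        obtain ⟨B, hBc, hiB⟩ := hfin (insert Z F)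
          (by
            rw [Finset.coe_insert]
            intro x hx
            rcases Set.mem_insert_iff.1 hx with rfl | hx
            · exact hZ
            · exact (hF hx).1)
        refine (hcS hBc).1.2 Z (hiB (by simp)) F ?_
        intro x hx
        exact ⟨hiB (by simp [hx]), (hF hx).2⟩
    · obtain ⟨B, hBc⟩ := hcne
      exact (hcS hBc).2.trans (Set.subset_sUnion_of_mem hBc)
  obtain ⟨M, hM0, hMmax⟩ := zorn_subset_nonempty
    {B : Set (Set ℕ) | IdealIndependent B ∧ A0 ⊆ B} hchainCond A0 ⟨hA0, subset_rfl⟩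
  refine ⟨M, ?_, hMmax.1.1, ?_⟩
  · exact ((Set.infinite_range_of_injective hS0inj).mono hMmax.1.2)
  · intro B hB hMB
    have hBS : B ∈ {B : Set (Set ℕ) | IdealIndependent B ∧ A0 ⊆ B} :=
      ⟨hB, hMmax.1.2.trans hMB⟩
    exact subset_antisymm (hMmax.2 hBS hMB) hMB

/-- 𝔲 ≤ 𝔰ₘₘ. -/
theorem stmt11 : uNum ≤ smm := by
  obtain ⟨A₀, hA₀inf, hA₀max⟩ := exists_infinite_maximal
  refine le_csInf ⟨Cardinal.mk ↥A₀, A₀, hA₀inf, hA₀max, rfl⟩ ?_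
  rintro c ⟨A, hinf, hmax, rfl⟩
  by_cases hgood : ∃ X ∈ A, ∀ S : Set ℕ,
      (∃ b ∈ genSets A X, (b \ S).Finite) ∨ (∃ b ∈ genSets A X, (b ∩ S).Finite)
  · obtain ⟨X, hX, hdec⟩ := hgood
    exact uNum_le_of_good hmax.1 hinf hX hdec
  · push_neg at hgood
    have hbad : ∀ X ∈ A, ∃ C : Set ℕ, ∀ F : Finset (Set ℕ), ↑F ⊆ A \ {X} →
        ((X \ ⋃ Y ∈ F, Y) ∩ C).Infinite ∧ ((X \ ⋃ Y ∈ F, Y) \ C).Infinite := by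
      intro X hX
      obtain ⟨S, h1, h2⟩ := hgood X hX
      refine ⟨S, fun F hF => ⟨?_, ?_⟩⟩
      · exact h2 (X \ ⋃ Y ∈ F, Y) ⟨F, hF, rfl⟩
      · exact h1 (X \ ⋃ Y ∈ F, Y) ⟨F, hF, rfl⟩
    exact uNum_le_continuum.trans (mk_continuum_le_of_bad hmax hinf hbad)
end

section
/- If $\mathcal{A}$ is a maximal ideal independent family of cardinality strictly less than $2^{\aleph_0}$, then there are at most finitely many $A \in \mathcal{A}$ for which the complemented filter $\mathcal{F}(\mathcal{A}, A)$ is not an ultrafilter. -/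
/-- A filter on ω is an ultrafilter. -/
def IsUltra (F : Filter ℕ) : Prop := F.NeBot ∧ ∀ S : Set ℕ, S ∈ F ∨ Sᶜ ∈ F

open Set Filter

lemma mem_complFilter_iff {A : Set (Set ℕ)} {X S : Set ℕ} :
    S ∈ complFilter A X ↔ ∃ F : Finset (Set ℕ), ↑F ⊆ A \ {X} ∧ X \ (⋃ Y ∈ F, Y) ⊆ S := by
  constructor
  · intro h
    rw [complFilter, Filter.mem_generate_iff] at h
    obtain ⟨t, htg, htfin, hts⟩ := h
    suffices h : ∃ F : Finset (Set ℕ), ↑F ⊆ A \ {X} ∧ X \ (⋃ Y ∈ F, Y) ⊆ ⋂₀ t from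
      ⟨h.choose, h.choose_spec.1, h.choose_spec.2.trans hts⟩
    clear hts
    revert htg
    refine Set.Finite.induction_on (motive := fun t _ => t ⊆ genSets A X → ∃ F : Finset (Set ℕ), ↑F ⊆ A \ {X} ∧ X \ (⋃ Y ∈ F, Y) ⊆ ⋂₀ t) t htfin (fun _ => ⟨∅, by simp, by simp⟩) ?_
    clear htfin
    intro u t hu htf ih htg
    obtain ⟨F, hF, hFs⟩ := ih (fun v hv => htg (Set.mem_insert_of_mem _ hv))
    obtain ⟨G, hG, rfl⟩ := htg (Set.mem_insert _ _)
    classical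
    refine ⟨F ∪ G, ?_, ?_⟩
    · intro v hv
      rcases Finset.mem_union.mp (by exact_mod_cast hv) with h | h
      · exact hF (by exact_mod_cast h)
      · exact hG (by exact_mod_cast h)
    · rw [Set.sInter_insert]
      intro a ha
      rw [Finset.set_biUnion_union] at ha
      constructor
      · exact ⟨ha.1, fun hc => ha.2 (Set.mem_union_right _ hc)⟩
      · exact hFs ⟨ha.1, fun hc => ha.2 (Set.mem_union_left _ hc)⟩
  · rintro ⟨F, hF, hFS⟩
    exact Filter.mem_of_superset (Filter.GenerateSets.basic ⟨F, hF, rfl⟩ : _ ∈ complFilter A X) hFS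

lemma complFilter_neBot {A : Set (Set ℕ)} {X : Set ℕ} (hA : IdealIndependent A) (hX : X ∈ A) :
    (complFilter A X).NeBot := by
  constructor
  intro hbot
  have h : (∅ : Set ℕ) ∈ complFilter A X := by rw [hbot]; exact Filter.mem_bot
  obtain ⟨F, hF, hFs⟩ := mem_complFilter_iff.mp h
  exact ((hA.2 X hX F hF).nonempty).not_subset_empty hFs

lemma insert_idealIndependent {A : Set (Set ℕ)} {B : Set ℕ} (hA : IdealIndependent A)
    (hBinf : B.Infinite)
    (hi : ∀ F : Finset (Set ℕ), ↑F ⊆ A → (B \ ⋃ Y ∈ F, Y).Infinite)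
    (hii : ∀ C ∈ A, ∀ F : Finset (Set ℕ), ↑F ⊆ A \ {C} → (C \ (B ∪ ⋃ Y ∈ F, Y)).Infinite) :
    IdealIndependent (insert B A) := by
  classical
  constructor
  · rintro X (rfl | hX)
    · exact hBinf
    · exact hA.1 X hX
  · rintro X (rfl | hX) F hF
    · refine hi F fun Y hY => ?_
      have := hF hY
      rw [Set.mem_diff, Set.mem_insert_iff] at this
      rcases this.1 with rfl | h
      · exact absurd rfl (this.2 ·)
      · exact h
    · have hsub : (↑(F.erase B) : Set (Set ℕ)) ⊆ A \ {X} := by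
        intro Y hY
        rw [Finset.coe_erase, Set.mem_diff] at hY
        have h2 := hF hY.1
        rw [Set.mem_diff, Set.mem_insert_iff] at h2
        rcases h2.1 with rfl | h
        · exact absurd rfl (hY.2 ·)
        · exact ⟨h, h2.2⟩
      refine (hii X hX (F.erase B) hsub).mono ?_
      intro a ha
      refine ⟨ha.1, fun hc => ?_⟩
      rw [Set.mem_iUnion₂] at hc
      obtain ⟨Y, hY, haY⟩ := hc
      by_cases hYB : Y = B
      · exact ha.2 (Set.mem_union_left _ (hYB ▸ haY))
      · exact ha.2 (Set.mem_union_right _ (Set.mem_iUnion₂.mpr ⟨Y, Finset.mem_erase.mpr ⟨hYB, hY⟩, haY⟩))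

lemma not_maximal_of_extend {A : Set (Set ℕ)} {B : Set ℕ} (hA : MaximalIdealIndependent A)
    (hB : B ∉ A) (h : IdealIndependent (insert B A)) : False := by
  have := hA.2 (insert B A) h (Set.subset_insert _ _)
  exact hB (this ▸ Set.mem_insert B A)

/-- encode the first `n` values of `x` as a natural number -/
noncomputable def tcode (x : ℕ → Bool) (n : ℕ) : ℕ :=
  Encodable.encode (List.ofFn fun i : Fin n => x i)

lemma tcode_inj (x : ℕ → Bool) : Function.Injective (tcode x) := by
  intro n m h
  have := Encodable.encode_injective h
  have hlen := congrArg List.length this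
  simpa using hlen

lemma tcode_eq {x y : ℕ → Bool} {n m : ℕ} (h : tcode x n = tcode y m) :
    n = m ∧ ∀ i < n, x i = y i := by
  have hl := Encodable.encode_injective h
  have hlen : n = m := by simpa using congrArg List.length hl
  subst hlen
  refine ⟨rfl, fun i hi => ?_⟩
  have := congrArg (fun l => l[i]?) hl
  simpa [List.getElem?_ofFn, hi] using this

lemma tcode_ad {x y : ℕ → Bool} (hxy : x ≠ y) :
    (Set.range (tcode x) ∩ Set.range (tcode y)).Finite := by
  obtain ⟨k, hk⟩ : ∃ k, x k ≠ y k := by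
    by_contra h; push_neg at h; exact hxy (funext h)
  refine Set.Finite.subset ((Set.finite_Iic k).image (tcode x)) ?_
  rintro z ⟨⟨n, rfl⟩, ⟨m, hm⟩⟩
  obtain ⟨rfl, hagree⟩ := tcode_eq hm.symm
  refine ⟨n, ?_, rfl⟩
  by_contra hnk
  exact hk (hagree k (by simpa using hnk))

lemma cover_step {A : Set (Set ℕ)} {B T : Set ℕ} (hB : B ∈ A)
    (hnp : ∀ p ∈ B, ∃ C, C ∈ A ∧ C ≠ B ∧ p ∈ C)
    (F : Finset (Set ℕ)) (hF : ↑F ⊆ A \ {B}) (hfin : ((B ∩ T) \ ⋃ Y ∈ F, Y).Finite) :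
    Tᶜ ∈ complFilter A B := by
  classical
  have hch : ∀ p : ℕ, ∃ C, p ∈ B → (C ∈ A ∧ C ≠ B ∧ p ∈ C) := by
    intro p
    by_cases hp : p ∈ B
    · obtain ⟨C, hC⟩ := hnp p hp
      exact ⟨C, fun _ => hC⟩
    · exact ⟨∅, fun h => absurd h hp⟩
  choose g hg using hch
  refine mem_complFilter_iff.mpr ⟨F ∪ (hfin.image g).toFinset, ?_, ?_⟩
  · intro Y hY
    rcases Finset.mem_union.mp (by exact_mod_cast hY) with h | h
    · exact hF (by exact_mod_cast h)
    · rw [Set.Finite.mem_toFinset] at h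
      obtain ⟨q, hq, rfl⟩ := h
      obtain ⟨h1, h2, _⟩ := hg q hq.1.1
      exact ⟨h1, h2⟩
  · intro q hq
    by_contra hqT
    rw [Set.mem_compl_iff, not_not] at hqT
    have hqK : q ∈ (B ∩ T) \ ⋃ Y ∈ F, Y := by
      refine ⟨⟨hq.1, hqT⟩, fun hc => hq.2 ?_⟩
      rw [Finset.set_biUnion_union]
      exact Set.mem_union_left _ hc
    obtain ⟨_, _, hq3⟩ := hg q hqK.1.1
    refine hq.2 ?_
    rw [Finset.set_biUnion_union]
    refine Set.mem_union_right _ ?_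
    rw [Set.mem_iUnion₂]
    exact ⟨g q, Set.Finite.mem_toFinset _ |>.mpr ⟨q, hqK, rfl⟩, hq3⟩

lemma mem_bad2 {A : Set (Set ℕ)} {B S : Set ℕ} (hB : B ∈ A)
    (hS : S ∉ complFilter A B) (hSc : Sᶜ ∉ complFilter A B)
    (hnp : ∀ p ∈ B, ∃ C, C ∈ A ∧ C ≠ B ∧ p ∈ C) :
    ∀ F : Finset (Set ℕ), ↑F ⊆ A \ {B} →
      ((B ∩ S) \ ⋃ Y ∈ F, Y).Infinite ∧ ((B \ S) \ ⋃ Y ∈ F, Y).Infinite := by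
  intro F hF
  constructor
  · intro hfin
    exact hSc (cover_step hB hnp F hF hfin)
  · intro hfin
    refine hS ?_
    have : ((B ∩ Sᶜ) \ ⋃ Y ∈ F, Y).Finite := by
      refine hfin.subset ?_
      intro a ha
      exact ⟨⟨ha.1.1, ha.1.2⟩, ha.2⟩
    simpa using cover_step hB hnp F hF this

lemma bad1_case {A : Set (Set ℕ)} (hA : MaximalIdealIndependent A)
    (h : {B | B ∈ A ∧ ∃ p ∈ B, ∀ C ∈ A, C ≠ B → p ∉ C}.Infinite) : False := by
  classical
  set Bad1 := {B | B ∈ A ∧ ∃ p ∈ B, ∀ C ∈ A, C ≠ B → p ∉ C} with hBad1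
  let e := h.natEmbedding
  let As : ℕ → Set ℕ := fun n => (e n : Set ℕ)
  have hAsinj : Function.Injective As := fun n m hnm => e.injective (Subtype.ext hnm)
  have hAsmem : ∀ n, As n ∈ A := fun n => (e n).2.1
  have hp : ∀ n, ∃ p ∈ As n, ∀ C ∈ A, C ≠ As n → p ∉ C := fun n => (e n).2.2
  choose p hpmem hppriv using hp
  -- p is injective
  have hpinj : Function.Injective p := by
    intro n m hnm
    by_contra hne
    exact hppriv m (As n) (hAsmem n) (fun h => hne (hAsinj h)) (hnm ▸ hpmem n)
  -- key: p n ∈ C ∈ A implies C = As n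
  have hkey : ∀ n, ∀ C ∈ A, p n ∈ C → C = As n := by
    intro n C hC hpC
    by_contra hne
    exact hppriv n C hC hne hpC
  set P : Set ℕ := Set.range p with hP
  have hPinf : P.Infinite := Set.infinite_range_of_injective hpinj
  have hPA : P ∉ A := by
    intro hmem
    rcases eq_or_ne P (As 0) with h0 | h0
    · exact hppriv 1 (As 0) (hAsmem 0) (fun hc => zero_ne_one (hAsinj hc)) (h0 ▸ ⟨1, rfl⟩)
    · exact hppriv 0 P hmem h0 ⟨0, rfl⟩
  refine not_maximal_of_extend hA hPA (insert_idealIndependent hA.1 hPinf ?_ ?_)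
  · -- P \ ⋃ F infinite
    intro F hF
    have hcov : {n | p n ∈ ⋃ Y ∈ F, Y} ⊆ As ⁻¹' ↑F := by
      intro n hn
      rw [Set.mem_setOf_eq, Set.mem_iUnion₂] at hn
      obtain ⟨C, hCF, hpC⟩ := hn
      have := hkey n C (hF hCF) hpC
      exact Set.mem_preimage.mpr (this ▸ hCF)
    have hfin : {n | p n ∈ ⋃ Y ∈ F, Y}.Finite :=
      ((F.finite_toSet.preimage (Function.Injective.injOn hAsinj))).subset hcov
    have : Set.InjOn p {n | p n ∉ ⋃ Y ∈ F, Y} := Function.Injective.injOn hpinj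
    refine Set.Infinite.mono ?_ (Set.Infinite.image this (hfin.infinite_compl))
    rintro q ⟨n, hn, rfl⟩
    exact ⟨⟨n, rfl⟩, hn⟩
  · -- C \ (P ∪ ⋃ F) infinite
    intro C hC F hF
    have hfin : (C ∩ P).Finite := by
      rcases Set.eq_empty_or_nonempty (C ∩ P) with he | ⟨q, hqC, hqP⟩
      · exact he ▸ Set.finite_empty
      · obtain ⟨n, rfl⟩ := hqP
        have hCn := hkey n C hC hqC
        refine Set.Finite.subset (Set.finite_singleton (p n)) ?_
        rintro q ⟨hqC', m, rfl⟩
        have := hkey m C hC hqC'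
        rw [hCn] at this
        rw [hAsinj this]
        rfl
    have := hA.1.2 C hC F hF
    refine Set.Infinite.mono ?_ (this.diff hfin)
    intro a ha
    refine ⟨ha.1.1, fun hc => ?_⟩
    rcases hc with hc | hc
    · exact ha.2 ⟨ha.1.1, hc⟩
    · exact ha.1.2 hc

lemma mk_nat_bool : Cardinal.mk (ℕ → Bool) = Cardinal.continuum := by
  simp [← Cardinal.power_def, Cardinal.mk_bool, Cardinal.two_power_aleph0]

lemma bad2_case {A : Set (Set ℕ)} (hA : MaximalIdealIndependent A)
    (hcard : Cardinal.mk ↥A < Cardinal.continuum)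
    (h : {B | B ∈ A ∧ ∃ S, ∀ F : Finset (Set ℕ), ↑F ⊆ A \ {B} →
      ((B ∩ S) \ ⋃ Y ∈ F, Y).Infinite ∧ ((B \ S) \ ⋃ Y ∈ F, Y).Infinite}.Infinite) : False := by
  classical
  let e := h.natEmbedding
  let As : ℕ → Set ℕ := fun n => (e n : Set ℕ)
  have hAsinj : Function.Injective As := fun n m hnm => e.injective (Subtype.ext hnm)
  have hAsmem : ∀ n, As n ∈ A := fun n => (e n).2.1
  have hSw : ∀ n, ∃ S, ∀ F : Finset (Set ℕ), ↑F ⊆ A \ {As n} →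
      ((As n ∩ S) \ ⋃ Y ∈ F, Y).Infinite ∧ ((As n \ S) \ ⋃ Y ∈ F, Y).Infinite :=
    fun n => (e n).2.2
  choose S hS using hSw
  -- the finite initial unions
  let FM : ℕ → Finset (Set ℕ) := fun n => (Finset.range n).image As
  have hFM : ∀ n, ↑(FM n) ⊆ A \ {As n} := by
    intro n Z hZ
    rw [Finset.coe_image] at hZ
    obtain ⟨m, hm, rfl⟩ := hZ
    rw [Finset.mem_coe, Finset.mem_range] at hm
    exact ⟨hAsmem m, fun hc => absurd (hAsinj hc) (Nat.ne_of_lt hm)⟩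
  -- the pieces
  let Y : ℕ → Bool → Set ℕ := fun n b =>
    (if b then As n \ S n else As n ∩ S n) \ ⋃ Z ∈ FM n, Z
  have hYsub : ∀ n b, Y n b ⊆ As n := by
    intro n b a ha
    rcases b with _ | _ <;> simp only [Y, if_pos, if_neg, Bool.false_eq_true,
      not_false_iff] at ha
    · exact ha.1.1
    · exact ha.1.1
  have hYlt : ∀ n b m, m < n → ∀ a ∈ Y n b, a ∉ As m := by
    intro n b m hm a ha hc
    refine ha.2 ?_
    rw [Set.mem_iUnion₂]
    exact ⟨As m, Finset.mem_image.mpr ⟨m, Finset.mem_range.mpr hm, rfl⟩, hc⟩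
  have hYdisj : ∀ n b m c, ∀ a, a ∈ Y n b → a ∈ Y m c → n = m ∧ b = c := by
    intro n b m c a ha hb
    rcases Nat.lt_trichotomy n m with hlt | rfl | hlt
    · exact absurd (hYsub n b ha) (hYlt m c n hlt a hb)
    · refine ⟨rfl, ?_⟩
      rcases b with _ | _ <;> rcases c with _ | _
      · rfl
      · simp only [Y, if_pos, Bool.false_eq_true, if_neg, not_false_iff] at ha hb
        exact absurd ha.1.2 hb.1.2
      · simp only [Y, if_pos, Bool.false_eq_true, if_neg, not_false_iff] at ha hb
        exact absurd hb.1.2 ha.1.2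
      · rfl
    · exact absurd (hYsub m c hb) (hYlt n b m hlt a ha)
  -- K1
  have hK1 : ∀ n b, ∀ F : Finset (Set ℕ), ↑F ⊆ A \ {As n} → (Y n b \ ⋃ Z ∈ F, Z).Infinite := by
    intro n b F hF
    have hsub : ↑(FM n ∪ F) ⊆ A \ {As n} := by
      intro Z hZ
      rcases Finset.mem_union.mp (by exact_mod_cast hZ) with h' | h'
      · exact hFM n (by exact_mod_cast h')
      · exact hF (by exact_mod_cast h')
    have := hS n (FM n ∪ F) hsub
    have hinf : ((if b then As n \ S n else As n ∩ S n) \ ⋃ Z ∈ FM n ∪ F, Z).Infinite := by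
      rcases b with _ | _
      · simpa using this.1
      · simpa using this.2
    refine hinf.mono ?_
    intro a ha
    rw [Finset.set_biUnion_union] at ha
    exact ⟨⟨ha.1, fun hc => ha.2 (Set.mem_union_left _ hc)⟩,
      fun hc => ha.2 (Set.mem_union_right _ hc)⟩
  -- the candidate sets
  let BB : (ℕ → Bool) → Set ℕ := fun x => ⋃ n, Y (tcode x n) false
  -- (a)
  have ha : ∀ x, ∀ F : Finset (Set ℕ), ↑F ⊆ A → (BB x \ ⋃ Z ∈ F, Z).Infinite := by
    intro x F hF
    have hfin : (As ⁻¹' ↑F).Finite := F.finite_toSet.preimage (Function.Injective.injOn hAsinj)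
    obtain ⟨k, ⟨⟨n, rfl⟩, hk2⟩⟩ := ((Set.infinite_range_of_injective (tcode_inj x)).diff hfin).nonempty
    have hsub : ↑F ⊆ A \ {As (tcode x n)} := by
      intro Z hZ
      exact ⟨hF hZ, fun hc => hk2 (by rw [Set.mem_preimage, ← hc]; exact hZ)⟩
    refine (hK1 _ false F hsub).mono ?_
    intro a haa
    exact ⟨Set.mem_iUnion.mpr ⟨n, haa.1⟩, haa.2⟩
  -- (bi)
  have hbi : ∀ x m, ∀ F : Finset (Set ℕ), ↑F ⊆ A \ {As m} →
      (As m \ (BB x ∪ ⋃ Z ∈ F, Z)).Infinite := by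
    intro x m F hF
    refine (hK1 m true F hF).mono ?_
    intro a haa
    refine ⟨hYsub m true haa.1, fun hc => ?_⟩
    rcases hc with hc | hc
    · obtain ⟨n, hn⟩ := Set.mem_iUnion.mp hc
      exact Bool.noConfusion (hYdisj m true (tcode x n) false a haa.1 hn).2
    · exact haa.2 hc
  -- BB x is never one of the As m
  have hnA : ∀ x m, BB x ≠ As m := by
    intro x m hc
    obtain ⟨k, ⟨n, rfl⟩, hk⟩ :=
      (Set.infinite_range_of_injective (tcode_inj x)).exists_gt m
    obtain ⟨a, haY⟩ := (hK1 (tcode x n) false ∅ (by simp)).nonempty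
    have haB : a ∈ BB x := Set.mem_iUnion.mpr ⟨n, haY.1⟩
    rw [hc] at haB
    exact hYlt (tcode x n) false m hk a haY.1 haB
  -- killed
  let Killed : (ℕ → Bool) → Set ℕ → Prop := fun x C =>
    C ∈ A ∧ (∀ m, C ≠ As m) ∧ ∃ F : Finset (Set ℕ), ↑F ⊆ A \ {C} ∧
      (C \ (BB x ∪ ⋃ Z ∈ F, Z)).Finite
  -- uniqueness
  have huniq : ∀ C x y, Killed x C → Killed y C → x = y := by
    intro C x y hx hy
    by_contra hxy
    obtain ⟨hCA, hCn, Fx, hFx, hfx⟩ := hx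
    obtain ⟨-, -, Fy, hFy, hfy⟩ := hy
    let G : Finset (Set ℕ) := ((tcode_ad hxy).image As).toFinset
    have hsub : ↑(Fx ∪ Fy ∪ G) ⊆ A \ {C} := by
      intro Z hZ
      rcases Finset.mem_union.mp (by exact_mod_cast hZ) with h' | h'
      · rcases Finset.mem_union.mp h' with h'' | h''
        · exact hFx (by exact_mod_cast h'')
        · exact hFy (by exact_mod_cast h'')
      · rw [Set.Finite.mem_toFinset] at h'
        obtain ⟨k, hk, rfl⟩ := h'
        exact ⟨hAsmem k, fun hcc => hCn k (by rw [hcc])⟩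
    have hD := hA.1.2 C hCA (Fx ∪ Fy ∪ G) hsub
    refine hD ((hfx.union hfy).subset ?_)
    intro a haD
    have hnotG : ∀ Z ∈ Fx ∪ Fy ∪ G, a ∉ Z := by
      intro Z hZ hc
      exact haD.2 (Set.mem_iUnion₂.mpr ⟨Z, hZ, hc⟩)
    by_cases haB : a ∈ BB x
    · -- then a ∉ BB y
      refine Set.mem_union_right _ ⟨haD.1, fun hc => ?_⟩
      rcases hc with hc | hc
      · obtain ⟨m, hm⟩ := Set.mem_iUnion.mp hc
        obtain ⟨n, hn⟩ := Set.mem_iUnion.mp haB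
        have := hYdisj (tcode x n) false (tcode y m) false a hn hm
        have hkE : tcode x n ∈ Set.range (tcode x) ∩ Set.range (tcode y) :=
          ⟨⟨n, rfl⟩, ⟨m, this.1.symm⟩⟩
        refine hnotG (As (tcode x n)) ?_ (hYsub _ false hn)
        refine Finset.mem_union_right _ ?_
        rw [Set.Finite.mem_toFinset]
        exact ⟨tcode x n, hkE, rfl⟩
      · obtain ⟨Z, hZ1, hZ2⟩ := Set.mem_iUnion₂.mp hc
        exact absurd hZ2 (hnotG Z (Finset.mem_union_left _ (Finset.mem_union_right _ hZ1)))
    · refine Set.mem_union_left _ ⟨haD.1, fun hc => ?_⟩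
      rcases hc with hc | hc
      · exact haB hc
      · obtain ⟨Z, hZ1, hZ2⟩ := Set.mem_iUnion₂.mp hc
        exact hnotG Z (Finset.mem_union_left _ (Finset.mem_union_left _ hZ1)) hZ2
  -- counting: some x is not killed
  have hexists : ∃ x : ℕ → Bool, ∀ C, ¬ Killed x C := by
    by_contra hall
    push_neg at hall
    choose Cf hCf using hall
    have hinj : Function.Injective Cf := fun x y hxy => huniq (Cf x) x y (hCf x) (hxy ▸ hCf y)
    have hinj2 : Function.Injective (fun x => (⟨Cf x, (hCf x).1⟩ : ↥A)) :=
      fun x y hxy => hinj (congrArg Subtype.val hxy)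
    have hle := Cardinal.mk_le_of_injective hinj2
    rw [mk_nat_bool] at hle
    exact absurd (hle.trans_lt hcard) (lt_irrefl _)
  obtain ⟨x, hx⟩ := hexists
  have hBBA : BB x ∉ A := by
    intro hmem
    exact hx (BB x) ⟨hmem, hnA x, ∅, by simp, by simp⟩
  refine not_maximal_of_extend hA hBBA (insert_idealIndependent hA.1 ?_ (ha x) ?_)
  · exact (ha x ∅ (by simp)).mono Set.diff_subset
  · intro C hC F hF
    by_cases hCm : ∃ m, C = As m
    · obtain ⟨m, rfl⟩ := hCm
      exact hbi x m F hF
    · push_neg at hCm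
      intro hfin
      exact hx C ⟨hC, hCm, F, hF, hfin⟩

/-- A maximal ideal independent family of size < 𝔠 has at most finitely many members
whose complemented filter is not an ultrafilter. -/
theorem stmt12 (A : Set (Set ℕ)) (hA : MaximalIdealIndependent A)
    (hcard : Cardinal.mk ↥A < Cardinal.continuum) :
    {B | B ∈ A ∧ ¬ IsUltra (complFilter A B)}.Finite := by
  classical
  by_contra hfin
  have hinf : {B | B ∈ A ∧ ¬ IsUltra (complFilter A B)}.Infinite := hfin
  have hsub : {B | B ∈ A ∧ ¬ IsUltra (complFilter A B)} ⊆
      {B | B ∈ A ∧ ∃ p ∈ B, ∀ C ∈ A, C ≠ B → p ∉ C} ∪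
      {B | B ∈ A ∧ ∃ S, ∀ F : Finset (Set ℕ), ↑F ⊆ A \ {B} →
        ((B ∩ S) \ ⋃ Y ∈ F, Y).Infinite ∧ ((B \ S) \ ⋃ Y ∈ F, Y).Infinite} := by
    intro B hB
    obtain ⟨hBA, hBu⟩ := hB
    have hne : (complFilter A B).NeBot := complFilter_neBot hA.1 hBA
    have hwit : ∃ Sw : Set ℕ, Sw ∉ complFilter A B ∧ Swᶜ ∉ complFilter A B := by
      by_contra hw
      push_neg at hw
      refine hBu ⟨hne, fun Sw => ?_⟩
      by_cases h1 : Sw ∈ complFilter A B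
      · exact Or.inl h1
      · exact Or.inr (hw Sw h1)
    obtain ⟨Sw, hS1, hS2⟩ := hwit
    by_cases hb1 : B ∈ {B | B ∈ A ∧ ∃ p ∈ B, ∀ C ∈ A, C ≠ B → p ∉ C}
    · exact Or.inl hb1
    · right
      have hnp : ∀ p ∈ B, ∃ C, C ∈ A ∧ C ≠ B ∧ p ∈ C := by
        intro p hp
        by_contra hcp
        push_neg at hcp
        exact hb1 ⟨hBA, p, hp, hcp⟩
      exact ⟨hBA, Sw, mem_bad2 hBA hS1 hS2 hnp⟩
  rcases Set.infinite_union.mp (hinf.mono hsub) with h1 | h2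
  · exact (bad1_case hA h1).elim
  · exact (bad2_case hA hcard h2).elim
end

section
/- There exists a maximal ideal independent family $\mathcal{A}$ on $\omega$ such that for every $A \in \mathcal{A}$ the complemented filter $\mathcal{F}(\mathcal{A}, A)$ is an ultrafilter. -/
namespace S14
open Set Filter Cardinal Ordinal

noncomputable def bitOf (s : Set ℕ) (k : ℕ) : Bool := @decide (k ∈ s) (Classical.propDecidable _)

theorem bitOf_eq {s t : Set ℕ} {k : ℕ} (h : bitOf s k = bitOf t k) : k ∈ s ↔ k ∈ t := by
  unfold bitOf at h; exact (decide_eq_decide).mp h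

noncomputable def Dad (s : Set ℕ) : Set ℕ :=
  Set.range fun n => Encodable.encode (List.ofFn fun k : Fin n => bitOf s k.1)

theorem Dad_infinite (s : Set ℕ) : (Dad s).Infinite := by
  apply Set.infinite_range_of_injective
  intro n m h
  have := Encodable.encode_injective h
  have := congrArg List.length this
  simpa using this

theorem Dad_ad {s t : Set ℕ} (hst : s ≠ t) : (Dad s ∩ Dad t).Finite := by
  have hk : ∃ k, ¬ (k ∈ s ↔ k ∈ t) := by
    by_contra h
    push_neg at h
    exact hst (Set.ext fun k => (h k))
  obtain ⟨k₀, hk₀⟩ := hk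
  have hsub : Dad s ∩ Dad t ⊆
      (fun n => Encodable.encode (List.ofFn fun k : Fin n => bitOf s k.1)) '' (Set.Iic k₀) := by
    rintro x ⟨hx1, hx2⟩
    obtain ⟨n, rfl⟩ := hx1
    obtain ⟨m, hm⟩ := hx2
    have h1 := Encodable.encode_injective hm
    have hnm : m = n := by simpa using congrArg List.length h1
    subst hnm
    have h2 := List.ofFn_injective h1
    refine ⟨m, ?_, rfl⟩
    by_contra hn
    simp only [Set.mem_Iic, not_le] at hn
    exact hk₀ (bitOf_eq (congrFun h2 ⟨k₀, hn⟩ :).symm)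
  exact ((Set.finite_Iic k₀).image _).subset hsub

abbrev Entry : Type := Set ℕ × Ultrafilter ℕ
abbrev Idx : Type := Set ℕ
abbrev Tsk : Type := (Set ℕ × Set ℕ) ⊕ (Set ℕ)

theorem aleph0_le_mk_idx : ℵ₀ ≤ #Idx := by
  calc ℵ₀ = #ℕ := mk_nat.symm
  _ ≤ #(Set ℕ) := mk_le_of_injective Set.singleton_injective

theorem mk_tsk : #Tsk = #Idx := by
  have h : ℵ₀ ≤ #(Set ℕ) := aleph0_le_mk_idx
  have : #Tsk = #(Set ℕ) * #(Set ℕ) + #(Set ℕ) := by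
    simp [Tsk, mk_sum, mk_prod, Cardinal.lift_id]
  rw [this, Cardinal.mul_eq_self h, Cardinal.add_eq_self h]

theorem mk_tsk_prod : #(Tsk × Tsk) = #Tsk := by
  have : #(Tsk × Tsk) = #Tsk * #Tsk := by simp [mk_prod]
  rw [this, Cardinal.mul_eq_self (by rw [mk_tsk]; exact aleph0_le_mk_idx)]

noncomputable def rT : Tsk → Tsk → Prop := (Cardinal.ord_eq Tsk).choose

noncomputable instance instWO : IsWellOrder Tsk rT := (Cardinal.ord_eq Tsk).choose_spec.choose

theorem type_rT : Ordinal.type rT = Cardinal.ord #Tsk :=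
  ((Cardinal.ord_eq Tsk).choose_spec.choose_spec).symm

noncomputable def eqvT : Tsk ≃ Tsk × Tsk := Classical.choice (Cardinal.eq.mp mk_tsk_prod.symm)

noncomputable def taskOf (i : Tsk) : Tsk := (eqvT i).1

theorem card_seg_lt (i : Tsk) : #{j // rT j i} < #Tsk := by
  rw [← Ordinal.card_typein (r := rT)]
  exact (Cardinal.lt_ord).mp (type_rT ▸ Ordinal.typein_lt_type rT i)


def mems (S : Set Entry) : Set (Set ℕ) := Prod.fst '' S

structure InvS (S : Set Entry) (R : Set Idx) : Prop where
  memSelf : ∀ e ∈ S, e.1 ∈ e.2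
  cof : ∀ e ∈ S, (e.2 : Filter ℕ) ≤ Filter.cofinite
  pair : ∀ e ∈ S, ∀ e' ∈ S, e ≠ e' → e'.1 ∉ e.2
  avoid : ∀ e ∈ S, ∀ ι, ι ∉ R → Dad ι ∉ e.2
  fresh : ∀ ι, ι ∉ R → ∀ 𝓑 : Finset (Set ℕ), ↑𝓑 ⊆ mems S → (Dad ι \ ⋃₀ ↑𝓑).Infinite

structure SpecAdd (S : Set Entry) (R : Set Idx) (Z : Set ℕ) (ι : Idx) (V : Ultrafilter ℕ) :
    Prop where
  notR : ι ∉ R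
  Znot : ∀ e ∈ S, Z ∉ e.2
  Dnot : ∀ e ∈ S, Dad ι ∉ e.2
  DZinf : (Dad ι \ Z).Infinite
  tame : ∀ ι', ι' ∉ R → ι' ≠ ι → ∀ 𝓑 : Finset (Set ℕ), ↑𝓑 ⊆ mems S →
    (Dad ι' \ (⋃₀ ↑𝓑 ∪ Z)).Infinite
  Vtrace : ∀ 𝓑 : Finset (Set ℕ), ↑𝓑 ⊆ mems S → Dad ι \ ⋃₀ ↑𝓑 ∈ V
  Vcof : (V : Filter ℕ) ≤ Filter.cofinite
  Vavoid : ∀ ι', ι' ∉ R → ι' ≠ ι → Dad ι' ∉ V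

def SpecTask : Tsk → Set Entry → Set ℕ → Idx → Prop
  | .inl (W, X), S, Z, _ => (∃ e ∈ S, e.1 = W ∧ X ∈ e.2) ∧ Z = W \ X
  | .inr Y, S, Z, ι => Y.Infinite ∧ (∀ e ∈ S, Y ∉ e.2) ∧
      (∀ 𝓑 : Finset (Set ℕ), ↑𝓑 ⊆ mems S → (Y \ ⋃₀ ↑𝓑).Infinite) ∧
      (Z = Y ∨ (Z = ∅ ∧ ∃ 𝓑 : Finset (Set ℕ), ↑𝓑 ⊆ mems S ∧ (Dad ι \ (⋃₀ ↑𝓑 ∪ Y)).Finite))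

def Spec (t : Tsk) (S : Set Entry) (R : Set Idx) (p : Set ℕ × Idx × Ultrafilter ℕ) : Prop :=
  SpecAdd S R p.1 p.2.1 p.2.2 ∧ SpecTask t S p.1 p.2.1

open Classical in
noncomputable def act (t : Tsk) (S : Set Entry) (R : Set Idx) : Set Entry × Set Idx :=
  if h : ∃ p : Set ℕ × Idx × Ultrafilter ℕ, Spec t S R p then
    ({(h.choose.1 ∪ Dad h.choose.2.1, h.choose.2.2)}, {h.choose.2.1})
  else (∅, ∅)

noncomputable def news : Tsk → Set Entry × Set Idx :=
  (instWO.toIsWellFounded.wf).fix fun i rec =>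
    act (taskOf i) (⋃ j : {j // rT j i}, (rec j.1 j.2).1) (⋃ j : {j // rT j i}, (rec j.1 j.2).2)

noncomputable def Sb (i : Tsk) : Set Entry := ⋃ j : {j // rT j i}, (news j.1).1
noncomputable def Rb (i : Tsk) : Set Idx := ⋃ j : {j // rT j i}, (news j.1).2
noncomputable def St (i : Tsk) : Set Entry := Sb i ∪ (news i).1
noncomputable def Rt (i : Tsk) : Set Idx := Rb i ∪ (news i).2
noncomputable def Stot : Set Entry := ⋃ i, (news i).1

theorem news_eq (i : Tsk) : news i = act (taskOf i) (Sb i) (Rb i) :=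
  WellFounded.fix_eq _ _ i

theorem news_cases (i : Tsk) :
    news i = (∅, ∅) ∨
    ∃ p : Set ℕ × Idx × Ultrafilter ℕ, Spec (taskOf i) (Sb i) (Rb i) p ∧
      (news i).1 = {(p.1 ∪ Dad p.2.1, p.2.2)} ∧ (news i).2 = {p.2.1} := by
  rw [news_eq]; unfold act
  by_cases h : ∃ p, Spec (taskOf i) (Sb i) (Rb i) p
  · right; exact ⟨h.choose, h.choose_spec, by rw [dif_pos h], by rw [dif_pos h]⟩
  · left; rw [dif_neg h]

theorem news_fired (i : Tsk) (h : ∃ p, Spec (taskOf i) (Sb i) (Rb i) p) :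
    ∃ p : Set ℕ × Idx × Ultrafilter ℕ, Spec (taskOf i) (Sb i) (Rb i) p ∧
      (news i).1 = {(p.1 ∪ Dad p.2.1, p.2.2)} ∧ (news i).2 = {p.2.1} :=
  ⟨h.choose, h.choose_spec, by rw [news_eq]; unfold act; rw [dif_pos h],
    by rw [news_eq]; unfold act; rw [dif_pos h]⟩

theorem news_subsingleton (i : Tsk) : ((news i).1).Subsingleton := by
  rcases news_cases i with h | ⟨p, _, h1, _⟩
  · rw [h]; exact subsingleton_empty
  · rw [h1]; exact subsingleton_singleton

theorem news_subsingleton' (i : Tsk) : ((news i).2).Subsingleton := by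
  rcases news_cases i with h | ⟨p, _, _, h2⟩
  · rw [h]; exact subsingleton_empty
  · rw [h2]; exact subsingleton_singleton

theorem Sb_mono {j i : Tsk} (h : rT j i) : Sb j ⊆ Sb i := by
  intro e he
  simp only [Sb, Set.mem_iUnion] at he ⊢
  obtain ⟨⟨k, hk⟩, hke⟩ := he
  exact ⟨⟨k, _root_.trans hk h⟩, hke⟩

theorem news_sub_Sb {j i : Tsk} (h : rT j i) : (news j).1 ⊆ Sb i := fun e he => by
  simp only [Sb, Set.mem_iUnion]; exact ⟨⟨j, h⟩, he⟩

theorem St_sub_Sb {j i : Tsk} (h : rT j i) : St j ⊆ Sb i :=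
  Set.union_subset (Sb_mono h) (news_sub_Sb h)

theorem Rb_mono {j i : Tsk} (h : rT j i) : Rb j ⊆ Rb i := by
  intro e he
  simp only [Rb, Set.mem_iUnion] at he ⊢
  obtain ⟨⟨k, hk⟩, hke⟩ := he
  exact ⟨⟨k, _root_.trans hk h⟩, hke⟩

theorem newsR_sub_Rb {j i : Tsk} (h : rT j i) : (news j).2 ⊆ Rb i := fun e he => by
  simp only [Rb, Set.mem_iUnion]; exact ⟨⟨j, h⟩, he⟩

theorem Rt_sub_Rb {j i : Tsk} (h : rT j i) : Rt j ⊆ Rb i :=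
  Set.union_subset (Rb_mono h) (newsR_sub_Rb h)

theorem mem_Sb {i : Tsk} {e : Entry} (h : e ∈ Sb i) : ∃ j, rT j i ∧ e ∈ (news j).1 := by
  simp only [Sb, Set.mem_iUnion] at h
  obtain ⟨⟨j, hj⟩, hje⟩ := h
  exact ⟨j, hj, hje⟩

theorem St_sub_Stot (i : Tsk) : St i ⊆ Stot := by
  rintro e (he | he)
  · obtain ⟨j, _, hj⟩ := mem_Sb he
    exact Set.mem_iUnion.mpr ⟨j, hj⟩
  · exact Set.mem_iUnion.mpr ⟨i, he⟩

theorem mem_Stot {e : Entry} (h : e ∈ Stot) : ∃ i, e ∈ (news i).1 := Set.mem_iUnion.mp h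


theorem inf_of_inter_finite {s t : Set ℕ} (hs : s.Infinite) (h : (s ∩ t).Finite) :
    (s \ t).Infinite := by
  have he : s \ (s ∩ t) = s \ t := Set.diff_self_inter
  rw [← he]
  exact hs.diff h

theorem inf_of_mem {U : Ultrafilter ℕ} {s : Set ℕ} (hs : s ∈ U)
    (hcof : (U : Filter ℕ) ≤ Filter.cofinite) : s.Infinite := by
  intro hfin
  have h1 : sᶜ ∈ U := hcof hfin.compl_mem_cofinite
  have h2 : s ∩ sᶜ ∈ U := Filter.inter_mem hs h1
  rw [Set.inter_compl_self] at h2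
  exact Ultrafilter.empty_notMem h2

theorem card_Sb_lt (i : Tsk) : #(Sb i) < #Idx := by
  have hinj : ∃ f : (Sb i) → {j // rT j i}, Function.Injective f := by
    refine ⟨fun e => ⟨(mem_Sb e.2).choose, (mem_Sb e.2).choose_spec.1⟩, ?_⟩
    intro e1 e2 h
    have h1 := (mem_Sb e1.2).choose_spec.2
    have h2 := (mem_Sb e2.2).choose_spec.2
    rw [Subtype.mk.injEq] at h
    rw [h] at h1
    exact Subtype.ext (news_subsingleton _ h1 h2)
  obtain ⟨f, hf⟩ := hinj
  calc #(Sb i) ≤ #{j // rT j i} := Cardinal.mk_le_of_injective hf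
  _ < #Tsk := card_seg_lt i
  _ = #Idx := mk_tsk

theorem card_Rb_lt (i : Tsk) : #(Rb i) < #Idx := by
  have hmem : ∀ ι : Rb i, ∃ j, rT j i ∧ (ι : Idx) ∈ (news j).2 := by
    rintro ⟨ι, hι⟩
    simp only [Rb, Set.mem_iUnion] at hι
    obtain ⟨⟨j, hj⟩, hje⟩ := hι
    exact ⟨j, hj, hje⟩
  have hinj : ∃ f : (Rb i) → {j // rT j i}, Function.Injective f := by
    refine ⟨fun e => ⟨(hmem e).choose, (hmem e).choose_spec.1⟩, ?_⟩
    intro e1 e2 h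
    have h1 := (hmem e1).choose_spec.2
    have h2 := (hmem e2).choose_spec.2
    rw [Subtype.mk.injEq] at h
    rw [h] at h1
    exact Subtype.ext (news_subsingleton' _ h1 h2)
  obtain ⟨f, hf⟩ := hinj
  calc #(Rb i) ≤ #{j // rT j i} := Cardinal.mk_le_of_injective hf
  _ < #Tsk := card_seg_lt i
  _ = #Idx := mk_tsk

theorem exists_notin {R : Set Idx} (h : #R < #Idx) : ∃ ι, ι ∉ R := by
  by_contra hc
  push_neg at hc
  have : R = Set.univ := Set.eq_univ_iff_forall.mpr hc
  rw [this, Cardinal.mk_univ] at h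
  exact lt_irrefl _ h

theorem exists_ultra {S : Set Entry} {R : Set Idx} (hI : InvS S R) {ι : Idx} (hι : ι ∉ R) :
    ∃ V : Ultrafilter ℕ, (∀ 𝓑 : Finset (Set ℕ), ↑𝓑 ⊆ mems S → Dad ι \ ⋃₀ ↑𝓑 ∈ V) ∧
      (V : Filter ℕ) ≤ Filter.cofinite ∧ ∀ ι', ι' ∉ R → ι' ≠ ι → Dad ι' ∉ V := by
  classical
  set gens : Set (Set ℕ) := {T | (∃ 𝓑 : Finset (Set ℕ), ↑𝓑 ⊆ mems S ∧ T = Dad ι \ ⋃₀ ↑𝓑) ∨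
    (∃ ι' : Idx, ι' ∉ R ∧ ι' ≠ ι ∧ T = (Dad ι')ᶜ)} with hgens
  have lowinf : ∀ 𝓑 : Finset (Set ℕ), ↑𝓑 ⊆ mems S → ∀ K : Finset Idx, (∀ κ ∈ K, κ ≠ ι) →
      ((Dad ι \ ⋃₀ ↑𝓑) \ ⋃ κ ∈ K, Dad κ).Infinite := by
    intro 𝓑 h𝓑 K hK
    apply inf_of_inter_finite (hI.fresh ι hι 𝓑 h𝓑)
    apply Set.Finite.subset (Set.Finite.biUnion K.finite_toSet
      (fun κ hκ => Dad_ad (fun h : ι = κ => (hK κ hκ) h.symm)))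
    rintro x ⟨hx1, hx2⟩
    simp only [Set.mem_iUnion] at hx2 ⊢
    obtain ⟨κ, hκ, hxκ⟩ := hx2
    exact ⟨κ, hκ, hx1.1, hxκ⟩
  have lower : ∀ b : Set (Set ℕ), b.Finite → b ⊆ gens →
      ∃ (𝓑 : Finset (Set ℕ)) (K : Finset Idx), ↑𝓑 ⊆ mems S ∧ (∀ κ ∈ K, κ ≠ ι) ∧
        (Dad ι \ ⋃₀ ↑𝓑) \ ⋃ κ ∈ K, Dad κ ⊆ ⋂₀ b := by
    intro b hb
    refine Set.Finite.induction_on _ hb (fun _ => ⟨∅, ∅, by simp, by simp, by simp⟩) ?_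
    rintro T b' hT hb' IH hsub
    obtain ⟨𝓑, K, h𝓑, hK, hlow⟩ := IH (fun x hx => hsub (Set.mem_insert_of_mem _ hx))
    have hTg : T ∈ gens := hsub (Set.mem_insert _ _)
    rcases hTg with ⟨𝓑', h𝓑', rfl⟩ | ⟨ι', hι'R, hι'ι, rfl⟩
    · refine ⟨𝓑 ∪ 𝓑', K, ?_, hK, ?_⟩
      · rw [Finset.coe_union]; exact Set.union_subset h𝓑 h𝓑'
      · rintro x ⟨⟨hxD, hxB⟩, hxK⟩
        rw [Set.sInter_insert]
        constructor
        · exact ⟨hxD, fun hx => hxB (by rw [Finset.coe_union, Set.sUnion_union]; exact Set.mem_union_right _ hx)⟩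
        · exact hlow ⟨⟨hxD, fun hx => hxB (by rw [Finset.coe_union, Set.sUnion_union]; exact Set.mem_union_left _ hx)⟩, hxK⟩
    · refine ⟨𝓑, insert ι' K, h𝓑, ?_, ?_⟩
      · intro κ hκ
        rcases Finset.mem_insert.mp hκ with rfl | hκ
        · exact hι'ι
        · exact hK κ hκ
      · rintro x ⟨hx1, hxK⟩
        rw [Set.sInter_insert]
        have hxK' : ∀ κ ∈ K, x ∉ Dad κ := by
          intro κ hκ hx
          exact hxK (Set.mem_iUnion.mpr ⟨κ, Set.mem_iUnion.mpr ⟨Finset.mem_insert_of_mem hκ, hx⟩⟩)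
        have hxι' : x ∉ Dad ι' :=
          fun hx => hxK (Set.mem_iUnion.mpr ⟨ι', Set.mem_iUnion.mpr ⟨Finset.mem_insert_self _ _, hx⟩⟩)
        exact ⟨hxι', hlow ⟨hx1, by simp only [Set.mem_iUnion]; rintro ⟨κ, hκ, hx⟩; exact hxK' κ hκ hx⟩⟩
  set H : Filter ℕ := Filter.generate gens ⊓ Filter.cofinite with hH
  have hne : Filter.NeBot H := by
    rw [hH, Filter.inf_neBot_iff]
    intro s hs t ht
    obtain ⟨b, hbg, hbfin, hbsub⟩ := Filter.mem_generate_iff.mp hs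
    obtain ⟨𝓑, K, h𝓑, hK, hlow⟩ := lower b hbfin hbg
    have hinf := lowinf 𝓑 h𝓑 K hK
    have : (((Dad ι \ ⋃₀ ↑𝓑) \ ⋃ κ ∈ K, Dad κ) \ tᶜ).Infinite :=
      hinf.diff (Filter.mem_cofinite.mp ht)
    obtain ⟨x, hx1, hx2⟩ := this.nonempty
    exact ⟨x, hbsub (hlow hx1), Set.not_notMem.mp hx2⟩
  have hle : (Ultrafilter.of H : Filter ℕ) ≤ H := Ultrafilter.of_le H
  refine ⟨Ultrafilter.of H, ?_, ?_, ?_⟩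
  · intro 𝓑 h𝓑
    have hTg : Dad ι \ ⋃₀ ↑𝓑 ∈ gens := Or.inl ⟨𝓑, h𝓑, rfl⟩
    have h1 : Dad ι \ ⋃₀ ↑𝓑 ∈ Filter.generate gens :=
      Filter.mem_generate_iff.mpr ⟨{Dad ι \ ⋃₀ ↑𝓑}, Set.singleton_subset_iff.mpr hTg,
        Set.finite_singleton _, by simp⟩
    exact hle (Filter.le_def.mp inf_le_left _ h1)
  · exact le_trans hle inf_le_right
  · intro ι' hι'R hι'ι
    have hTg : (Dad ι')ᶜ ∈ gens := Or.inr ⟨ι', hι'R, hι'ι, rfl⟩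
    have h1 : (Dad ι')ᶜ ∈ Filter.generate gens :=
      Filter.mem_generate_iff.mpr ⟨{(Dad ι')ᶜ}, Set.singleton_subset_iff.mpr hTg,
        Set.finite_singleton _, by simp⟩
    exact Ultrafilter.compl_mem_iff_notMem.mp (hle (Filter.le_def.mp inf_le_left _ h1))


theorem mems_union_single (S : Set Entry) (c : Entry) :
    mems (S ∪ {c}) = mems S ∪ {c.1} := by
  unfold mems
  rw [Set.image_union, Set.image_singleton]

theorem preserve {S : Set Entry} {R : Set Idx} {Z : Set ℕ} {ι : Idx} {V : Ultrafilter ℕ}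
    (hI : InvS S R) (h : SpecAdd S R Z ι V) :
    InvS (S ∪ {(Z ∪ Dad ι, V)}) (R ∪ {ι}) := by
  classical
  set c : Entry := (Z ∪ Dad ι, V) with hc
  have hDV : Dad ι ∈ V := by
    have := h.Vtrace ∅ (by simp)
    simpa using this
  have hcV : c.1 ∈ V := Filter.mem_of_superset hDV Set.subset_union_right
  have holdV : ∀ e' ∈ S, e'.1 ∉ V := by
    intro e' he' hmem
    have h1 : Dad ι \ ⋃₀ ↑({e'.1} : Finset (Set ℕ)) ∈ V := by
      apply h.Vtrace
      simp only [Finset.coe_singleton, Set.singleton_subset_iff]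
      exact ⟨e', he', rfl⟩
    have h2 : Dad ι \ e'.1 ∈ V := by simpa using h1
    have h3 : (Dad ι \ e'.1) ∩ e'.1 ∈ V := Filter.inter_mem h2 hmem
    rw [Set.diff_inter_self] at h3
    exact Ultrafilter.empty_notMem h3
  have hnewOld : ∀ e ∈ S, c.1 ∉ e.2 := by
    intro e he hmem
    rcases Ultrafilter.union_mem_iff.mp hmem with h1 | h1
    · exact h.Znot e he h1
    · exact h.Dnot e he h1
  constructor
  · rintro e (he | he)
    · exact hI.memSelf e he
    · rw [Set.mem_singleton_iff] at he; subst he; exact hcV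
  · rintro e (he | he)
    · exact hI.cof e he
    · rw [Set.mem_singleton_iff] at he; subst he; exact h.Vcof
  · rintro e (he | he) e' (he' | he') hne
    · exact hI.pair e he e' he' hne
    · rw [Set.mem_singleton_iff] at he'; subst he'; exact hnewOld e he
    · rw [Set.mem_singleton_iff] at he; subst he; exact holdV e' he'
    · rw [Set.mem_singleton_iff] at he he'; subst he; subst he'; exact absurd rfl hne
  · rintro e (he | he) ι' hι'
    · exact hI.avoid e he ι' (fun hm => hι' (Set.mem_union_left _ hm))
    · rw [Set.mem_singleton_iff] at he; subst he
      exact h.Vavoid ι' (fun hm => hι' (Set.mem_union_left _ hm))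
        (fun hm => hι' (Set.mem_union_right _ (by rw [hm]; exact Set.mem_singleton _)))
  · intro ι' hι' 𝓑 h𝓑
    have hι'R : ι' ∉ R := fun hm => hι' (Set.mem_union_left _ hm)
    have hι'ι : ι' ≠ ι := fun hm => hι' (Set.mem_union_right _ (by rw [hm]; exact Set.mem_singleton _))
    have htame := h.tame ι' hι'R hι'ι (𝓑.erase c.1) (by
      intro M hM
      simp only [Finset.coe_erase, Set.mem_diff, Set.mem_singleton_iff] at hM
      have := h𝓑 hM.1
      rw [mems_union_single] at this
      rcases this with h1 | h1
      · exact h1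
      · exact absurd h1 hM.2)
    have hAD : (Dad ι' ∩ Dad ι).Finite := Dad_ad hι'ι
    have hinf : ((Dad ι' \ (⋃₀ ↑(𝓑.erase c.1) ∪ Z)) \ Dad ι).Infinite :=
      inf_of_inter_finite htame (hAD.subset (fun x hx => ⟨hx.1.1, hx.2⟩))
    apply hinf.mono
    rintro x ⟨⟨hx1, hx2⟩, hx3⟩
    refine ⟨hx1, ?_⟩
    rintro ⟨M, hM, hxM⟩
    by_cases hMc : M = c.1
    · subst hMc
      rcases hxM with hxM | hxM
      · exact hx2 (Set.mem_union_right _ hxM)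
      · exact hx3 hxM
    · refine hx2 (Set.mem_union_left _ ⟨M, ?_, hxM⟩)
      simp only [Finset.coe_erase, Set.mem_diff, Set.mem_singleton_iff]
      exact ⟨hM, hMc⟩

theorem finset_bound (s : Finset Tsk) (hs : s.Nonempty) :
    ∃ m ∈ s, ∀ j ∈ s, j = m ∨ rT j m := by
  classical
  revert hs
  induction s using Finset.induction_on with
  | empty => intro h; exact absurd h (by simp)
  | @insert a s' ha IH =>
    intro _
    rcases Finset.eq_empty_or_nonempty s' with rfl | hs'
    · refine ⟨a, by simp, ?_⟩
      intro j hj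
      simp only [Finset.mem_insert, Finset.notMem_empty, or_false] at hj
      exact Or.inl hj
    · obtain ⟨m, hm, hmax⟩ := IH hs'
      rcases trichotomous_of rT a m with h | h | h
      · refine ⟨m, Finset.mem_insert_of_mem hm, ?_⟩
        intro j hj
        rcases Finset.mem_insert.mp hj with rfl | hj
        · exact Or.inr h
        · exact hmax j hj
      · refine ⟨m, Finset.mem_insert_of_mem hm, ?_⟩
        intro j hj
        rcases Finset.mem_insert.mp hj with rfl | hj
        · exact Or.inl h
        · exact hmax j hj
      · refine ⟨a, Finset.mem_insert_self _ _, ?_⟩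
        intro j hj
        rcases Finset.mem_insert.mp hj with rfl | hj
        · exact Or.inl rfl
        · rcases hmax j hj with rfl | hj'
          · exact Or.inr h
          · exact Or.inr (_root_.trans hj' h)

theorem mems_Sb_stage {i : Tsk} {M : Set ℕ} (h : M ∈ mems (Sb i)) :
    ∃ j, rT j i ∧ M ∈ mems (St j) := by
  obtain ⟨e, he, rfl⟩ := h
  obtain ⟨j, hj, hje⟩ := mem_Sb he
  exact ⟨j, hj, ⟨e, Set.mem_union_right _ hje, rfl⟩⟩

theorem invSb (i : Tsk) (IH : ∀ j, rT j i → InvS (St j) (Rt j)) : InvS (Sb i) (Rb i) := by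
  classical
  constructor
  · intro e he
    obtain ⟨j, hj, hje⟩ := mem_Sb he
    exact (IH j hj).memSelf e (Set.mem_union_right _ hje)
  · intro e he
    obtain ⟨j, hj, hje⟩ := mem_Sb he
    exact (IH j hj).cof e (Set.mem_union_right _ hje)
  · intro e he e' he' hne
    obtain ⟨j, hj, hje⟩ := mem_Sb he
    obtain ⟨j', hj', hje'⟩ := mem_Sb he'
    rcases trichotomous_of rT j j' with h | h | h
    · exact (IH j' hj').pair e (Set.mem_union_left _ (St_sub_Sb h (Set.mem_union_right _ hje)))
        e' (Set.mem_union_right _ hje') hne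
    · subst h
      exact (IH j hj).pair e (Set.mem_union_right _ hje) e' (Set.mem_union_right _ hje') hne
    · exact (IH j hj).pair e (Set.mem_union_right _ hje)
        e' (Set.mem_union_left _ (St_sub_Sb h (Set.mem_union_right _ hje'))) hne
  · intro e he ι hι
    obtain ⟨j, hj, hje⟩ := mem_Sb he
    exact (IH j hj).avoid e (Set.mem_union_right _ hje) ι (fun hm => hι (Rt_sub_Rb hj hm))
  · intro ι hι 𝓑 h𝓑
    rcases Finset.eq_empty_or_nonempty 𝓑 with rfl | h𝓑ne
    · simpa using Dad_infinite ι
    · have hstage : ∀ M : {M // M ∈ 𝓑}, ∃ j, rT j i ∧ (M : Set ℕ) ∈ mems (St j) :=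
        fun M => mems_Sb_stage (h𝓑 M.2)
      set g : {M // M ∈ 𝓑} → Tsk := fun M => (hstage M).choose with hg
      have hgspec : ∀ M : {M // M ∈ 𝓑}, rT (g M) i ∧ (M : Set ℕ) ∈ mems (St (g M)) :=
        fun M => (hstage M).choose_spec
      have hne' : (𝓑.attach.image g).Nonempty := by
        obtain ⟨M, hM⟩ := h𝓑ne
        exact ⟨g ⟨M, hM⟩, Finset.mem_image_of_mem _ (Finset.mem_attach _ _)⟩
      obtain ⟨m, hm, hmax⟩ := finset_bound _ hne'
      obtain ⟨M₀, hM₀, hgM₀⟩ := Finset.mem_image.mp hm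
      have hmi : rT m i := hgM₀ ▸ (hgspec M₀).1
      have h𝓑m : ↑𝓑 ⊆ mems (St m) := by
        intro M hM
        have h1 := (hgspec ⟨M, hM⟩).2
        rcases hmax (g ⟨M, hM⟩) (Finset.mem_image_of_mem _ (Finset.mem_attach _ _)) with he | he
        · rwa [he] at h1
        · refine Set.image_mono ?_ h1
          exact fun e her => Set.mem_union_left _ (St_sub_Sb he her)
      exact (IH m hmi).fresh ι (fun hm' => hι (Rt_sub_Rb hmi hm')) 𝓑 h𝓑m

theorem inv_St : ∀ i, InvS (St i) (Rt i) := by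
  intro i
  induction i using (instWO.toIsWellFounded.wf).induction with
  | _ i IH =>
    have hSb : InvS (Sb i) (Rb i) := invSb i IH
    rcases news_cases i with h | ⟨p, hp, h1, h2⟩
    · unfold St Rt
      rw [h]
      simpa using hSb
    · unfold St Rt
      rw [h1, h2]
      exact preserve hSb hp.1

theorem inv_Sb (i : Tsk) : InvS (Sb i) (Rb i) := invSb i (fun j _ => inv_St j)


theorem spec_T1 {S : Set Entry} {R : Set Idx} {W X : Set ℕ} (hI : InvS S R) (hR : #R < #Idx)
    (hcond : ∃ e ∈ S, e.1 = W ∧ X ∈ e.2) : ∃ p, Spec (Sum.inl (W, X)) S R p := by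
  classical
  obtain ⟨e, he, heW, heX⟩ := hcond
  obtain ⟨ι, hι⟩ := exists_notin hR
  obtain ⟨V, hV1, hV2, hV3⟩ := exists_ultra hI hι
  have hWmem : W ∈ mems S := ⟨e, he, heW⟩
  have hfreshW : (Dad ι \ W).Infinite := by
    have := hI.fresh ι hι {W} (by simpa using hWmem)
    simpa using this
  refine ⟨(W \ X, ι, V), ⟨hι, ?_, fun e' he' => hI.avoid e' he' ι hι, ?_, ?_, hV1, hV2, hV3⟩,
    ⟨e, he, heW, heX⟩, rfl⟩
  · intro e' he' hmem
    by_cases hee : e' = e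
    · subst hee
      have h1 : (W \ X) ∩ X ∈ e'.2 := Filter.inter_mem hmem heX
      rw [Set.diff_inter_self] at h1
      exact Ultrafilter.empty_notMem h1
    · have h1 : e.1 ∉ e'.2 := hI.pair e' he' e he hee
      rw [heW] at h1
      exact h1 (Filter.mem_of_superset hmem Set.diff_subset)
  · exact hfreshW.mono (fun x hx => ⟨hx.1, fun hc => hx.2 hc.1⟩)
  · intro ι' h1 h2 𝓑 h𝓑
    have hfr := hI.fresh ι' h1 (insert W 𝓑) (by
      rw [Finset.coe_insert]
      exact Set.insert_subset hWmem h𝓑)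
    apply hfr.mono
    intro x hx
    rw [Finset.coe_insert, Set.sUnion_insert] at hx
    exact ⟨hx.1, fun hc => hx.2 (by
      rcases hc with hc | hc
      · exact Set.mem_union_right _ hc
      · exact Set.mem_union_left _ hc.1)⟩

theorem spec_T2 {S : Set Entry} {R : Set Idx} {Y : Set ℕ} (hI : InvS S R) (hR : #R < #Idx)
    (hYinf : Y.Infinite) (hYU : ∀ e ∈ S, Y ∉ e.2)
    (hYind : ∀ 𝓑 : Finset (Set ℕ), ↑𝓑 ⊆ mems S → (Y \ ⋃₀ ↑𝓑).Infinite) :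
    ∃ p, Spec (Sum.inr Y) S R p := by
  classical
  by_cases hfat : ∃ ι, ι ∉ R ∧ ∃ 𝓑 : Finset (Set ℕ), ↑𝓑 ⊆ mems S ∧ (Dad ι \ (⋃₀ ↑𝓑 ∪ Y)).Finite
  · obtain ⟨ι, hι, hfat'⟩ := hfat
    obtain ⟨V, hV1, hV2, hV3⟩ := exists_ultra hI hι
    refine ⟨(∅, ι, V), ⟨hι, ?_, fun e' he' => hI.avoid e' he' ι hι, ?_, ?_, hV1, hV2, hV3⟩,
      hYinf, hYU, hYind, Or.inr ⟨rfl, hfat'⟩⟩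
    · intro e' _ hmem
      exact Ultrafilter.empty_notMem hmem
    · simpa using Dad_infinite ι
    · intro ι' h1 _ 𝓑 h𝓑
      simpa using hI.fresh ι' h1 𝓑 h𝓑
  · push_neg at hfat
    obtain ⟨ι, hι⟩ := exists_notin hR
    obtain ⟨V, hV1, hV2, hV3⟩ := exists_ultra hI hι
    refine ⟨(Y, ι, V), ⟨hι, hYU, fun e' he' => hI.avoid e' he' ι hι, ?_, ?_, hV1, hV2, hV3⟩,
      hYinf, hYU, hYind, Or.inl rfl⟩
    · have := hfat ι hι ∅ (by simp)
      simpa using this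
    · intro ι' h1 _ 𝓑 h𝓑
      have := hfat ι' h1 𝓑 h𝓑
      exact this

noncomputable def fiberEquiv (t : Tsk) : {j // taskOf j = t} ≃ Tsk where
  toFun j := (eqvT j.1).2
  invFun s := ⟨eqvT.symm (t, s), by simp [taskOf]⟩
  left_inv j := by
    apply Subtype.ext
    have h : eqvT j.1 = (t, (eqvT j.1).2) := by
      have := j.2
      unfold taskOf at this
      exact Prod.ext this rfl
    show eqvT.symm (t, (eqvT j.1).2) = j.1
    rw [← h, Equiv.symm_apply_apply]
  right_inv s := by
    show (eqvT (eqvT.symm (t, s))).2 = s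
    rw [Equiv.apply_symm_apply]

theorem taskOf_after (t : Tsk) (i : Tsk) : ∃ j, rT i j ∧ taskOf j = t := by
  by_contra hc
  push_neg at hc
  have hsub : {j | taskOf j = t} ⊆ {j | rT j i} ∪ {i} := by
    intro j hj
    rcases trichotomous_of rT j i with h | h | h
    · exact Or.inl h
    · exact Or.inr h
    · exact absurd hj (hc j h)
  have hfib : #{j | taskOf j = t} = #Tsk := Cardinal.mk_congr (fiberEquiv t)
  have h1 : #{j | rT j i} < #Tsk := card_seg_lt i
  have h2 : (1 : Cardinal) < #Tsk := by
    have := aleph0_le_mk_idx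
    rw [← mk_tsk] at this
    exact lt_of_lt_of_le Cardinal.one_lt_aleph0 this
  have h3 : #({i} : Set Tsk) = 1 := Cardinal.mk_singleton i
  have hcard : #{j | taskOf j = t} ≤ #{j | rT j i} + #({i} : Set Tsk) :=
    le_trans (Cardinal.mk_le_mk_of_subset hsub) (Cardinal.mk_union_le _ _)
  rw [hfib, h3] at hcard
  have hlt : #{j | rT j i} + 1 < #Tsk := by
    apply Cardinal.add_lt_of_lt _ h1 h2
    rw [mk_tsk]
    exact aleph0_le_mk_idx
  exact absurd (lt_of_le_of_lt hcard hlt) (lt_irrefl _)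

theorem tot_memSelf {e : Entry} (h : e ∈ Stot) : e.1 ∈ e.2 := by
  obtain ⟨i, hi⟩ := mem_Stot h
  exact (inv_St i).memSelf e (Set.mem_union_right _ hi)

theorem tot_cof {e : Entry} (h : e ∈ Stot) : (e.2 : Filter ℕ) ≤ Filter.cofinite := by
  obtain ⟨i, hi⟩ := mem_Stot h
  exact (inv_St i).cof e (Set.mem_union_right _ hi)

theorem tot_pair {e e' : Entry} (he : e ∈ Stot) (he' : e' ∈ Stot) (hne : e ≠ e') :
    e'.1 ∉ e.2 := by
  obtain ⟨i, hi⟩ := mem_Stot he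
  obtain ⟨i', hi'⟩ := mem_Stot he'
  rcases trichotomous_of rT i i' with h | h | h
  · exact (inv_St i').pair e (Set.mem_union_left _ (news_sub_Sb h hi))
      e' (Set.mem_union_right _ hi') hne
  · subst h
    exact (inv_St i).pair e (Set.mem_union_right _ hi) e' (Set.mem_union_right _ hi') hne
  · exact (inv_St i).pair e (Set.mem_union_right _ hi)
      e' (Set.mem_union_left _ (news_sub_Sb h hi')) hne


def Afam : Set (Set ℕ) := mems Stot

theorem gen_mem {e : Entry} (he : e ∈ Stot) (F : Finset (Set ℕ))
    (hF : ↑F ⊆ Afam \ {e.1}) : (e.1 \ ⋃ Y ∈ F, Y) ∈ e.2 := by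
  classical
  have hcompl : ∀ Y ∈ F, Yᶜ ∈ e.2 := by
    intro Y hY
    obtain ⟨hYA, hYne⟩ := hF hY
    obtain ⟨e', he', rfl⟩ := hYA
    have hne' : e ≠ e' := by
      intro h
      exact hYne (by rw [← h]; rfl)
    exact (Ultrafilter.compl_mem_iff_notMem).mpr (tot_pair he he' hne')
  have h1 : (⋂ Y ∈ F, Yᶜ) ∈ e.2 := by
    rw [← Ultrafilter.mem_coe]
    exact (Filter.biInter_mem F.finite_toSet).mpr hcompl
  have h2 : e.1 ∩ ⋂ Y ∈ F, Yᶜ ∈ e.2 := Filter.inter_mem (tot_memSelf he) h1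
  have heq : e.1 \ ⋃ Y ∈ F, Y = e.1 ∩ ⋂ Y ∈ F, Yᶜ := by
    rw [Set.diff_eq, Set.compl_iUnion₂]
  rw [heq]
  exact h2

theorem mem_Afam_infinite {M : Set ℕ} (h : M ∈ Afam) : M.Infinite := by
  obtain ⟨e, he, rfl⟩ := h
  exact inf_of_mem (tot_memSelf he) (tot_cof he)

theorem indep : IdealIndependent Afam := by
  constructor
  · exact fun X hX => mem_Afam_infinite hX
  · rintro X ⟨e, he, rfl⟩ F hF
    exact inf_of_mem (gen_mem he F hF) (tot_cof he)

theorem fired_T1 {e : Entry} (he : e ∈ Stot) {X : Set ℕ} (hX : X ∈ e.2) :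
    ∃ c : Set ℕ, c ∈ Afam ∧ c ≠ e.1 ∧ e.1 \ c ⊆ X := by
  classical
  obtain ⟨i₀, hi₀⟩ := mem_Stot he
  obtain ⟨j, hij, htask⟩ := taskOf_after (Sum.inl (e.1, X)) i₀
  have heSb : e ∈ Sb j := news_sub_Sb hij hi₀
  have hspec : ∃ p, Spec (taskOf j) (Sb j) (Rb j) p := by
    rw [htask]
    exact spec_T1 (inv_Sb j) (card_Rb_lt j) ⟨e, heSb, rfl, hX⟩
  obtain ⟨p, hp, h1, _⟩ := news_fired j hspec
  have hcStot : (p.1 ∪ Dad p.2.1, p.2.2) ∈ Stot :=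
    Set.mem_iUnion.mpr ⟨j, by rw [h1]; exact rfl⟩
  have htk := hp.2
  rw [htask] at htk
  have hZ : p.1 = e.1 \ X := htk.2
  have hD : Dad p.2.1 ∈ p.2.2 := by simpa using hp.1.Vtrace ∅ (by simp)
  have hcne : (p.1 ∪ Dad p.2.1, p.2.2) ≠ e := by
    intro hEq
    have hDn : Dad p.2.1 ∉ e.2 := hp.1.Dnot e heSb
    have h2 : p.2.2 = e.2 := by rw [← hEq]
    rw [h2] at hD
    exact hDn hD
  have hc1ne : p.1 ∪ Dad p.2.1 ≠ e.1 := by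
    intro h
    have hnm := tot_pair he hcStot (fun hh => hcne hh.symm)
    rw [show ((p.1 ∪ Dad p.2.1, p.2.2) : Entry).1 = p.1 ∪ Dad p.2.1 from rfl, h] at hnm
    exact hnm (tot_memSelf he)
  refine ⟨p.1 ∪ Dad p.2.1, ⟨(p.1 ∪ Dad p.2.1, p.2.2), hcStot, rfl⟩, hc1ne, ?_⟩
  rintro x ⟨hx1, hx2⟩
  by_contra hxX
  exact hx2 (Or.inl (hZ ▸ ⟨hx1, hxX⟩))

theorem ultra_eq {e : Entry} (he : e ∈ Stot) :
    (e.2 : Filter ℕ) = complFilter Afam e.1 := by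
  classical
  apply le_antisymm
  · rw [complFilter, Filter.le_generate_iff]
    rintro T ⟨F, hF, rfl⟩
    exact gen_mem he F hF
  · refine Filter.le_def.mpr ?_
    intro s hs
    obtain ⟨c, hcA, hcne, hsub⟩ := fired_T1 he hs
    have hgen : e.1 \ ⋃ Y ∈ ({c} : Finset (Set ℕ)), Y ∈ genSets Afam e.1 := by
      refine ⟨{c}, ?_, rfl⟩
      simp only [Finset.coe_singleton, Set.singleton_subset_iff]
      exact ⟨hcA, hcne⟩
    have hsub2 : e.1 \ ⋃ Y ∈ ({c} : Finset (Set ℕ)), Y ⊆ s := by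
      simp only [Finset.mem_singleton, Set.iUnion_iUnion_eq_left]
      exact hsub
    rw [complFilter]
    exact Filter.mem_of_superset (Filter.mem_generate_iff.mpr
      ⟨{e.1 \ ⋃ Y ∈ ({c} : Finset (Set ℕ)), Y}, Set.singleton_subset_iff.mpr hgen,
        Set.finite_singleton _, by simp⟩) hsub2

theorem maximal : ∀ B : Set (Set ℕ), IdealIndependent B → Afam ⊆ B → B = Afam := by
  classical
  intro B hB hAB
  by_contra hne
  have hex : ∃ Y, Y ∈ B ∧ Y ∉ Afam := by
    by_contra h
    push_neg at h
    exact hne (Set.Subset.antisymm (fun Y hY => h Y hY) hAB)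
  obtain ⟨Y, hYB, hYA⟩ := hex
  have hYinf : Y.Infinite := hB.1 Y hYB
  by_cases hcase : ∃ e ∈ Stot, Y ∈ e.2
  · obtain ⟨e, he, hYe⟩ := hcase
    obtain ⟨c, hcA, hcne, hsub⟩ := fired_T1 he hYe
    have h1 : ↑({c, Y} : Finset (Set ℕ)) ⊆ B \ {e.1} := by
      intro M hM
      simp only [Finset.coe_insert, Finset.coe_singleton, Set.mem_insert_iff,
        Set.mem_singleton_iff] at hM
      rcases hM with rfl | rfl
      · exact ⟨hAB hcA, hcne⟩
      · exact ⟨hYB, fun h => hYA (h ▸ ⟨e, he, rfl⟩)⟩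
    have h2 := hB.2 e.1 (hAB ⟨e, he, rfl⟩) _ h1
    have h3 : e.1 \ ⋃ M ∈ ({c, Y} : Finset (Set ℕ)), M = ∅ := by
      ext x
      simp only [Set.mem_diff, Set.mem_iUnion, Finset.mem_insert, Finset.mem_singleton,
        Set.mem_empty_iff_false, iff_false, not_and, not_not, not_exists]
      intro hx1 hx2
      exact absurd (hsub ⟨hx1, fun hc => hx2 c (Or.inl rfl) hc⟩) (fun hY => hx2 Y (Or.inr rfl) hY)
    rw [h3] at h2
    exact h2 Set.finite_empty
  · push_neg at hcase
    obtain ⟨j, hj⟩ : ∃ j, taskOf j = Sum.inr Y :=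
      ⟨eqvT.symm (Sum.inr Y, Sum.inr Y), by unfold taskOf; rw [Equiv.apply_symm_apply]⟩
    by_cases hind : ∀ 𝓑 : Finset (Set ℕ), ↑𝓑 ⊆ mems (Sb j) → (Y \ ⋃₀ ↑𝓑).Infinite
    · have hspec : ∃ p, Spec (taskOf j) (Sb j) (Rb j) p := by
        rw [hj]
        refine spec_T2 (inv_Sb j) (card_Rb_lt j) hYinf ?_ hind
        intro e heS
        exact hcase e (St_sub_Stot j (Set.mem_union_left _ heS))
      obtain ⟨p, hp, h1, _⟩ := news_fired j hspec
      have hcStot : (p.1 ∪ Dad p.2.1, p.2.2) ∈ Stot :=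
        Set.mem_iUnion.mpr ⟨j, by rw [h1]; exact rfl⟩
      have hcA : p.1 ∪ Dad p.2.1 ∈ Afam := ⟨(p.1 ∪ Dad p.2.1, p.2.2), hcStot, rfl⟩
      have htk := hp.2
      rw [hj] at htk
      rcases htk.2.2.2 with hZ | ⟨hZ, 𝓑, h𝓑S, hfat⟩
      · -- added Y ∪ Dad ι
        have hne1 : p.1 ∪ Dad p.2.1 ≠ Y := by
          obtain ⟨x, hx1, hx2⟩ := hp.1.DZinf.nonempty
          intro h
          rw [hZ] at hx2
          exact hx2 (by rw [← h]; exact Or.inr hx1)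
        have h1' : ↑({p.1 ∪ Dad p.2.1} : Finset (Set ℕ)) ⊆ B \ {Y} := by
          simp only [Finset.coe_singleton, Set.singleton_subset_iff]
          exact ⟨hAB hcA, hne1⟩
        have h2 := hB.2 Y hYB _ h1'
        have h3 : Y \ ⋃ M ∈ ({p.1 ∪ Dad p.2.1} : Finset (Set ℕ)), M = ∅ := by
          simp only [Finset.mem_singleton, Set.iUnion_iUnion_eq_left]
          rw [Set.diff_eq_empty]
          rw [hZ]
          exact Set.subset_union_left
        rw [h3] at h2
        exact h2 Set.finite_empty
      · -- fat case : added Dad ι covering reservoir piece inside Y mod members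
        have hMne : ∀ M ∈ 𝓑, M ≠ p.1 ∪ Dad p.2.1 := by
          intro M hM h
          obtain ⟨e', he', rfl⟩ := h𝓑S hM
          have he'S : e' ∈ Stot := St_sub_Stot j (Set.mem_union_left _ he')
          have hD : Dad p.2.1 ∈ p.2.2 := by simpa using hp.1.Vtrace ∅ (by simp)
          have hcne' : e' ≠ (p.1 ∪ Dad p.2.1, p.2.2) := by
            intro hEq
            have hDn : Dad p.2.1 ∉ e'.2 := hp.1.Dnot e' he'
            have h2 : e'.2 = p.2.2 := by rw [hEq]
            rw [h2] at hDn
            exact hDn hD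
          have hnm := tot_pair he'S hcStot hcne'
          rw [← h] at hnm
          exact hnm (tot_memSelf he'S)
        have h1' : ↑(insert Y 𝓑) ⊆ B \ {p.1 ∪ Dad p.2.1} := by
          intro M hM
          rw [Finset.coe_insert] at hM
          rcases hM with rfl | hM
          · exact ⟨hYB, fun h => hYA (h ▸ hcA)⟩
          · obtain ⟨e', he', rfl⟩ := h𝓑S hM
            exact ⟨hAB ⟨e', St_sub_Stot j (Set.mem_union_left _ he'), rfl⟩,
              hMne _ hM⟩
        have h2 := hB.2 (p.1 ∪ Dad p.2.1) (hAB hcA) _ h1'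
        have h3 : ((p.1 ∪ Dad p.2.1) \ ⋃ M ∈ insert Y 𝓑, M).Finite := by
          apply hfat.subset
          rintro x ⟨hx1, hx2⟩
          have hxD : x ∈ Dad p.2.1 := by
            rcases hx1 with hx1 | hx1
            · rw [hZ] at hx1; exact absurd hx1 (Set.notMem_empty x)
            · exact hx1
          refine ⟨hxD, ?_⟩
          rintro (hx | hx)
          · obtain ⟨M, hM, hxM⟩ := hx
            exact hx2 (Set.mem_iUnion.mpr ⟨M, Set.mem_iUnion.mpr
              ⟨Finset.mem_insert_of_mem hM, hxM⟩⟩)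
          · exact hx2 (Set.mem_iUnion.mpr ⟨Y, Set.mem_iUnion.mpr
              ⟨Finset.mem_insert_self _ _, hx⟩⟩)
        exact h2 h3
    · push_neg at hind
      obtain ⟨𝓑, h𝓑S, hfin⟩ := hind
      have hfin' : (Y \ ⋃₀ ↑𝓑).Finite := hfin
      have h1' : ↑𝓑 ⊆ B \ {Y} := by
        intro M hM
        obtain ⟨e', he', rfl⟩ := h𝓑S hM
        have he'S : e' ∈ Stot := St_sub_Stot j (Set.mem_union_left _ he')
        exact ⟨hAB ⟨e', he'S, rfl⟩, fun h => hYA (h ▸ ⟨e', he'S, rfl⟩)⟩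
      have h2 := hB.2 Y hYB 𝓑 h1'
      have heq : Y \ ⋃ M ∈ 𝓑, M = Y \ ⋃₀ ↑𝓑 := by
        rw [Set.sUnion_eq_biUnion]
        simp
      rw [heq] at h2
      exact h2 hfin'

end S14

/-- There exists a maximal ideal independent family all of whose complemented filters
are ultrafilters. -/
theorem stmt14 : ∃ A : Set (Set ℕ), MaximalIdealIndependent A ∧
    ∀ B ∈ A, ∃ U : Ultrafilter ℕ, (U : Filter ℕ) = complFilter A B := by
  refine ⟨S14.Afam, ⟨S14.indep, S14.maximal⟩, ?_⟩
  rintro Bm ⟨e, he, rfl⟩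
  exact ⟨e.2, S14.ultra_eq he⟩
end
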